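/- arXiv:1807.11183 — 2 statements merged into one kernel-verified Lean document; each statement's English description precedes it below -/
import Mathlib

section
/- Let R be a proper nonempty subset of [n]. The map T ↦ (F_T, (T(R,X))_{X⊆R}), where F_T is the set of edges of T in directions belonging to R, is a bijection from the set of spanning trees of Q_n that reduce over R onto the set of pairs (F, (T^X)_{X⊆R}) such that: (i) T^X is a spanning tree of Q_n(R,X) for every X ⊆ R; (ii) F is a set of edges of Q_n in directions belonging to R on which the map e ↦ π_R(e) is injective; and (iii) {π_R(e) : e ∈ F} is the edge set of a spanning tree of Q_R. -/
open SimpleGraph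

/-- The `n`-cube: vertices are the subsets of `[n]` (modelled as `Finset (Fin n)`),
with an edge between `X` and `Y` iff their symmetric difference is a singleton. -/
def cube (n : ℕ) : SimpleGraph (Finset (Fin n)) where
  Adj X Y := (symmDiff X Y).card = 1
  symm := by
    constructor
    intro X Y h
    rwa [symmDiff_comm]
  loopless := by
    constructor
    intro X h
    simp [symmDiff_self, Finset.bot_eq_empty] at h

/-- `T` is a spanning tree of `G` (both graphs on the same vertex set). -/
def IsSpanningTreeOf {V : Type*} (T G : SimpleGraph V) : Prop :=
  T ≤ G ∧ T.IsTree

/-- The edge `e` of the `n`-cube is in direction `i`. -/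
def edgeInDir {n : ℕ} (i : Fin n) (e : Sym2 (Finset (Fin n))) : Prop :=
  ∃ X : Finset (Fin n), e = s(X, symmDiff X {i})

/-- The number of edges of `T` in direction `i`. -/
noncomputable def dirCount {n : ℕ} (T : SimpleGraph (Finset (Fin n))) (i : Fin n) : ℕ :=
  {e | e ∈ T.edgeSet ∧ edgeInDir i e}.ncard

/-- `a` is the signature of the tree `T`. -/
def HasSig {n : ℕ} (T : SimpleGraph (Finset (Fin n))) (a : Fin n → ℕ) : Prop :=
  ∀ i, dirCount T i = a i

/-- `a` is a signature of `Q_n`, i.e. the signature of some spanning tree of the `n`-cube. -/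
def IsSignature (n : ℕ) (a : Fin n → ℕ) : Prop :=
  ∃ T, IsSpanningTreeOf T (cube n) ∧ HasSig T a

/-- A section of the set of nonempty subsets of `[n]`. -/
def IsSection {n : ℕ} (ψ : Finset (Fin n) → Fin n) : Prop :=
  ∀ X : Finset (Fin n), X.Nonempty → ψ X ∈ X

/-- The number of nonempty subsets on which the section `ψ` takes the value `i`. -/
noncomputable def secCount {n : ℕ} (ψ : Finset (Fin n) → Fin n) (i : Fin n) : ℕ :=
  {X : Finset (Fin n) | X.Nonempty ∧ ψ X = i}.ncard

/-- The tuple `a` reduces over `R` : `Σ_{i ∈ R} a i = 2^|R| - 1`. -/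
def ReducesOver {n : ℕ} (a : Fin n → ℕ) (R : Finset (Fin n)) : Prop :=
  ∑ i ∈ R, a i = 2 ^ R.card - 1

/-- `a` is reducible: it reduces over some proper nonempty subset of `[n]`. -/
def IsReducibleSig {n : ℕ} (a : Fin n → ℕ) : Prop :=
  ∃ R : Finset (Fin n), R.Nonempty ∧ R ≠ Finset.univ ∧ ReducesOver a R

/-- `a` is irreducible. -/
def IsIrreducibleSig {n : ℕ} (a : Fin n → ℕ) : Prop := ¬ IsReducibleSig a

/-- `T` is upright: every vertex `X` is at distance `|X|` in `T` from the root `∅`. -/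
def IsUpright {n : ℕ} (T : SimpleGraph (Finset (Fin n))) : Prop :=
  ∀ X : Finset (Fin n), T.dist X ∅ = X.card

/-- `ψ` is the section associated to the upright tree `T`: for each nonempty `X`,
`ψ X ∈ X` and `X - {ψ X}` is the next vertex after `X` on the path in `T` from `X` to `∅`. -/
def IsTreeSection {n : ℕ} (T : SimpleGraph (Finset (Fin n))) (ψ : Finset (Fin n) → Fin n) : Prop :=
  ∀ X : Finset (Fin n), X.Nonempty → ψ X ∈ X ∧ T.Adj X (X.erase (ψ X))

/-- The minimum of `Σ_{i ∈ K} a i` over the sets `K` of `k` directions. -/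
noncomputable def minSum {n : ℕ} (a : Fin n → ℕ) (k : ℕ) : ℕ :=
  sInf {m : ℕ | ∃ K : Finset (Fin n), K.card = k ∧ ∑ i ∈ K, a i = m}

/-- The excess of `a` at `k`. -/
noncomputable def excess {n : ℕ} (a : Fin n → ℕ) (k : ℕ) : ℤ :=
  (minSum a k : ℤ) - (2 ^ k - 1)

/-- The result of sliding the edge `e` in direction `i`. -/
def slideEdge {n : ℕ} (i : Fin n) (e : Sym2 (Finset (Fin n))) : Sym2 (Finset (Fin n)) :=
  Sym2.map (fun X => symmDiff X {i}) e

/-- The edge `e` of the spanning tree `T` of `Q_n` is `i`-slidable. -/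
def Slidable (n : ℕ) (T : SimpleGraph (Finset (Fin n))) (i : Fin n)
    (e : Sym2 (Finset (Fin n))) : Prop :=
  e ∈ T.edgeSet ∧
    IsSpanningTreeOf (SimpleGraph.fromEdgeSet ((T.edgeSet \ {e}) ∪ {slideEdge i e})) (cube n)

/-- The edge set `E` is (the edge set of) a spanning tree of the subgraph of the
`n`-cube induced on the vertex set `s`. -/
def IsSpanningTreeOn (n : ℕ) (s : Set (Finset (Fin n))) (E : Set (Sym2 (Finset (Fin n)))) : Prop :=
  E ⊆ (cube n).edgeSet ∧ (∀ e ∈ E, ∀ v ∈ e, v ∈ s) ∧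
    ((SimpleGraph.fromEdgeSet E).induce s).IsTree

/-- The edges of `T` with both endpoints in `s`. -/
def edgesWithin {n : ℕ} (s : Set (Finset (Fin n))) (T : SimpleGraph (Finset (Fin n))) :
    Set (Sym2 (Finset (Fin n))) :=
  {e | e ∈ T.edgeSet ∧ ∀ v ∈ e, v ∈ s}

/-- The edge `e` of the tree with edge set `E`, spanning the subgraph of the `n`-cube
induced on `s`, is `i`-slidable. -/
def SlidableOn (n : ℕ) (s : Set (Finset (Fin n))) (E : Set (Sym2 (Finset (Fin n))))
    (i : Fin n) (e : Sym2 (Finset (Fin n))) : Prop :=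
  e ∈ E ∧ IsSpanningTreeOn n s ((E \ {e}) ∪ {slideEdge i e})

/-- The number of edges of `T` in direction `i` with both endpoints in `s`. -/
noncomputable def dirCountOn {n : ℕ} (s : Set (Finset (Fin n)))
    (T : SimpleGraph (Finset (Fin n))) (i : Fin n) : ℕ :=
  {e | e ∈ T.edgeSet ∧ edgeInDir i e ∧ ∀ v ∈ e, v ∈ s}.ncard

/-- `T'` is a spanning tree of the `n`-cube obtained from the spanning tree `T` by a
single edge slide. -/
def SlideStep (n : ℕ) (T T' : SimpleGraph (Finset (Fin n))) : Prop :=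
  IsSpanningTreeOf T (cube n) ∧ IsSpanningTreeOf T' (cube n) ∧
    ∃ (i : Fin n) (e : Sym2 (Finset (Fin n))), e ∈ T.edgeSet ∧
      T' = SimpleGraph.fromEdgeSet ((T.edgeSet \ {e}) ∪ {slideEdge i e})

/-- The trees `T` and `T'` are related by a single edge slide. -/
def SlideAdj (n : ℕ) (T T' : SimpleGraph (Finset (Fin n))) : Prop :=
  T ≠ T' ∧ ∃ (i : Fin n) (e : Sym2 (Finset (Fin n))),
    (e ∈ T.edgeSet ∧ T' = SimpleGraph.fromEdgeSet ((T.edgeSet \ {e}) ∪ {slideEdge i e})) ∨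
    (e ∈ T'.edgeSet ∧ T = SimpleGraph.fromEdgeSet ((T'.edgeSet \ {e}) ∪ {slideEdge i e}))

/-- The spanning trees of the `n`-cube. -/
def SpanningTrees (n : ℕ) := {T : SimpleGraph (Finset (Fin n)) // IsSpanningTreeOf T (cube n)}

/-- The edge slide graph `E(n)` of the `n`-cube. -/
def eslide (n : ℕ) : SimpleGraph (SpanningTrees n) where
  Adj T T' := SlideAdj n T.1 T'.1
  symm := by
    constructor
    rintro T T' ⟨hne, i, e, h⟩
    exact ⟨hne.symm, i, e, h.symm⟩
  loopless := by
    constructor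
    rintro T ⟨hne, -⟩
    exact hne rfl

/-- The projection `π_R(T)` of `T` to `Q_R`: a graph on the subsets of `R`, with `A`
adjacent to `B` iff some edge of `T` projects to `{A, B}`. -/
def projTree (n : ℕ) (R : Finset (Fin n)) (T : SimpleGraph (Finset (Fin n))) :
    SimpleGraph ↥{W : Finset (Fin n) | W ⊆ R} where
  Adj A B := A.1 ≠ B.1 ∧ ∃ U V : Finset (Fin n), T.Adj U V ∧ U ∩ R = A.1 ∧ V ∩ R = B.1
  symm := by
    constructor
    rintro A B ⟨hne, U, V, hUV, hU, hV⟩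
    exact ⟨hne.symm, V, U, hUV.symm, hV, hU⟩
  loopless := by
    constructor
    rintro A ⟨hne, -⟩
    exact hne rfl

/-- The projected edge set `π_R(T)`: images under `π_R` of the edges of `T` in
directions belonging to `R`. -/
def projEdges {n : ℕ} (R : Finset (Fin n)) (T : SimpleGraph (Finset (Fin n))) :
    Set (Sym2 (Finset (Fin n))) :=
  {f | ∃ e ∈ T.edgeSet, (∃ i ∈ R, edgeInDir i e) ∧ f = Sym2.map (· ∩ R) e}

/-- The decomposition `T ↦ (F_T, (T(R,X))_{X ⊆ R})` of a tree reducing over `R`. -/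
def decompose (n : ℕ) (R : Finset (Fin n)) (T : SimpleGraph (Finset (Fin n))) :
    Set (Sym2 (Finset (Fin n))) ×
      ((X : Finset (Fin n)) → X ⊆ R → SimpleGraph ↥{W : Finset (Fin n) | W ∩ R = X}) :=
  ⟨{e | e ∈ T.edgeSet ∧ ∃ i ∈ R, edgeInDir i e},
   fun X _ => T.induce {W : Finset (Fin n) | W ∩ R = X}⟩

/-- `s` is the least index such that `ε_k(a) = 0` for all `s ≤ k ≤ n`; i.e. the
entries of (an ordered) `a` with index `≤ s` form the unsaturated part of `a`. -/
def UnsatIndex (n : ℕ) (a : Fin n → ℕ) (s : ℕ) : Prop :=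
  (∀ k, s ≤ k → k ≤ n → excess a k = 0) ∧
    ∀ s' < s, ¬ (∀ k, s' ≤ k → k ≤ n → excess a k = 0)

/-- The restriction of `a` to its first `s` entries is reducible (as a tuple of length `s`). -/
def ReducibleBelow {n : ℕ} (a : Fin n → ℕ) (s : ℕ) : Prop :=
  ∃ R : Finset (Fin n), R.Nonempty ∧ (∀ i ∈ R, (i : ℕ) < s) ∧ R.card < s ∧
    ∑ i ∈ R, a i = 2 ^ R.card - 1

/-- `a` is strictly reducible: it is reducible and its unsaturated part is reducible. -/
def StrictlyReducible (n : ℕ) (a : Fin n → ℕ) : Prop :=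
  IsReducibleSig a ∧
    ∃ (σ : Equiv.Perm (Fin n)) (s : ℕ), Monotone (a ∘ σ) ∧
      UnsatIndex n (a ∘ σ) s ∧ ReducibleBelow (a ∘ σ) s

section Basics

variable {n : ℕ} {R : Finset (Fin n)}

lemma cube_adj {U V : Finset (Fin n)} : (cube n).Adj U V ↔ ∃ i, symmDiff U V = {i} := by
  simp [cube, Finset.card_eq_one]

lemma edgeInDir_iff {i : Fin n} {U V : Finset (Fin n)} :
    edgeInDir i s(U, V) ↔ symmDiff U V = {i} := by
  constructor
  · rintro ⟨X, hX⟩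
    rw [Sym2.eq_iff] at hX
    rcases hX with ⟨rfl, rfl⟩ | ⟨rfl, rfl⟩
    · exact symmDiff_symmDiff_cancel_left _ _
    · rw [symmDiff_comm]; exact symmDiff_symmDiff_cancel_left _ _
  · intro h
    exact ⟨U, by rw [← h, symmDiff_symmDiff_cancel_left]⟩

lemma inter_distrib_symmDiff (U V : Finset (Fin n)) :
    symmDiff (U ∩ R) (V ∩ R) = symmDiff U V ∩ R := by
  ext x
  simp only [Finset.mem_symmDiff, Finset.mem_inter]
  tauto

lemma inter_eq_of_dir_not_mem {i : Fin n} {U V : Finset (Fin n)}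
    (h : symmDiff U V = {i}) (hi : i ∉ R) : U ∩ R = V ∩ R := by
  have := inter_distrib_symmDiff (R := R) U V
  rw [h] at this
  have h2 : ({i} : Finset (Fin n)) ∩ R = ∅ := by
    simp [Finset.singleton_inter_of_notMem hi]
  rw [h2] at this
  rwa [← Finset.bot_eq_empty, symmDiff_eq_bot] at this

lemma inter_symmDiff_of_dir_mem {i : Fin n} {U V : Finset (Fin n)}
    (h : symmDiff U V = {i}) (hi : i ∈ R) : symmDiff (U ∩ R) (V ∩ R) = {i} := by
  rw [inter_distrib_symmDiff, h, Finset.singleton_inter_of_mem hi]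

lemma inter_ne_of_dir_mem {i : Fin n} {U V : Finset (Fin n)}
    (h : symmDiff U V = {i}) (hi : i ∈ R) : U ∩ R ≠ V ∩ R := by
  intro he
  have := inter_symmDiff_of_dir_mem h hi
  rw [he, symmDiff_self] at this
  exact (Finset.singleton_ne_empty i) this.symm

/-- Every cube edge between vertices with different `R`-coordinates has direction in `R`. -/
lemma dir_mem_of_inter_ne {U V : Finset (Fin n)} (h : (cube n).Adj U V)
    (hne : U ∩ R ≠ V ∩ R) : ∃ i ∈ R, symmDiff U V = {i} := by
  obtain ⟨i, hi⟩ := cube_adj.mp h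
  refine ⟨i, ?_, hi⟩
  by_contra hiR
  exact hne (inter_eq_of_dir_not_mem hi hiR)

lemma dir_unique {i j : Fin n} {U V : Finset (Fin n)} (h : symmDiff U V = {i})
    (h' : symmDiff U V = {j}) : i = j := by
  have := h.symm.trans h'
  simpa [Finset.singleton_inj] using this

end Basics
section TreeLemmas

variable {V : Type*}

lemma reachable_delete_of_reachable (G : SimpleGraph V) {u v : V}
    (h : (G \ SimpleGraph.fromEdgeSet {s(u,v)}).Reachable u v) {a b : V}
    (hab : G.Reachable a b) : (G \ SimpleGraph.fromEdgeSet {s(u,v)}).Reachable a b := by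
  obtain ⟨p⟩ := hab
  induction p with
  | nil => exact Reachable.refl _
  | @cons a c b hadj p ih =>
    refine Reachable.trans ?_ ih
    by_cases he : s(a, c) = s(u, v)
    · rw [Sym2.eq_iff] at he
      rcases he with ⟨rfl, rfl⟩ | ⟨rfl, rfl⟩
      · exact h
      · exact h.symm
    · exact SimpleGraph.Adj.reachable (by
        rw [sdiff_adj]
        refine ⟨hadj, ?_⟩
        rw [fromEdgeSet_adj]
        rintro ⟨h1, -⟩
        exact he h1)

lemma tree_count [Fintype V] {G : SimpleGraph V} (hG : G.IsTree) :
    Nat.card G.edgeSet + 1 = Fintype.card V := by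
  classical
  have : Fintype G.edgeSet := Fintype.ofFinite _
  rw [Nat.card_eq_fintype_card, ← SimpleGraph.edgeFinset_card]
  exact hG.card_edgeFinset

lemma card_le_of_connected [Fintype V] (G : SimpleGraph V) (h : G.Connected) :
    Fintype.card V ≤ Nat.card G.edgeSet + 1 := by
  classical
  generalize hk : Nat.card G.edgeSet = k
  induction k using Nat.strong_induction_on generalizing G with
  | _ k ih =>
  by_cases hA : G.IsAcyclic
  · rw [← hk, tree_count ⟨h, hA⟩]
  · rw [SimpleGraph.IsAcyclic] at hA
    push_neg at hA
    obtain ⟨v, c, hc⟩ := hA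
    cases c with
    | nil => exact absurd rfl hc.ne_nil
    | @cons _ w _ hadj p =>
      have hmem : s(v, w) ∈ (SimpleGraph.Walk.cons hadj p).edges := by
        simp [SimpleGraph.Walk.edges_cons]
      have hnb : ¬ G.IsBridge s(v, w) := by
        rw [SimpleGraph.isBridge_iff_mem_and_forall_cycle_notMem hadj]
        push_neg
        exact ⟨v, _, hc, hmem⟩
      rw [SimpleGraph.isBridge_iff] at hnb
      push_neg at hnb
      have hreach := hnb
      set G' := G \ SimpleGraph.fromEdgeSet {s(v, w)} with hG'
      have hconn : G'.Connected := by
        haveI := h.nonempty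
        exact SimpleGraph.Connected.mk
          (fun a b => reachable_delete_of_reachable G hreach (h.preconnected a b))
      have hedge : G'.edgeSet = G.edgeSet \ {s(v, w)} := by
        rw [hG', SimpleGraph.edgeSet_sdiff, SimpleGraph.edgeSet_fromEdgeSet]
        ext e
        simp only [Set.mem_diff, Set.mem_singleton_iff, Set.mem_setOf_eq, not_and, not_not]
        constructor
        · rintro ⟨he, h2⟩
          exact ⟨he, fun hev => (G.not_isDiag_of_mem_edgeSet he (hev ▸ h2 hev))⟩
        · rintro ⟨he, h2⟩
          exact ⟨he, fun hev => absurd hev h2⟩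
      have hvw : s(v, w) ∈ G.edgeSet := hadj
      have hk1 : 1 ≤ k := by
        rw [← hk, Nat.card_coe_set_eq]
        rw [Nat.one_le_iff_ne_zero]
        intro h0
        rw [Set.ncard_eq_zero (Set.toFinite _)] at h0
        rw [h0] at hvw
        exact hvw
      have hcard : Nat.card G'.edgeSet = k - 1 := by
        rw [← Set.singleton_subset_iff] at hvw
        rw [Nat.card_coe_set_eq, hedge,
          Set.ncard_diff hvw (Set.toFinite _), Set.ncard_singleton, ← Nat.card_coe_set_eq, hk]
      have := ih (k - 1) (by omega) G' hconn hcard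
      omega

lemma isTree_of_connected_card [Fintype V] (G : SimpleGraph V) (h : G.Connected)
    (hcard : Nat.card G.edgeSet + 1 ≤ Fintype.card V) :
    G.IsTree ∧ Nat.card G.edgeSet + 1 = Fintype.card V := by
  classical
  have hA : G.IsAcyclic := by
    by_contra hA
    rw [SimpleGraph.IsAcyclic] at hA
    push_neg at hA
    obtain ⟨v, c, hc⟩ := hA
    cases c with
    | nil => exact absurd rfl hc.ne_nil
    | @cons _ w _ hadj p =>
      have hmem : s(v, w) ∈ (SimpleGraph.Walk.cons hadj p).edges := by
        simp [SimpleGraph.Walk.edges_cons]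
      have hnb : ¬ G.IsBridge s(v, w) := by
        rw [SimpleGraph.isBridge_iff_mem_and_forall_cycle_notMem hadj]
        push_neg
        exact ⟨v, _, hc, hmem⟩
      rw [SimpleGraph.isBridge_iff] at hnb
      push_neg at hnb
      have hreach := hnb
      set G' := G \ SimpleGraph.fromEdgeSet {s(v, w)} with hG'
      have hconn : G'.Connected := by
        haveI := h.nonempty
        exact SimpleGraph.Connected.mk
          (fun a b => reachable_delete_of_reachable G hreach (h.preconnected a b))
      have hedge : G'.edgeSet = G.edgeSet \ {s(v, w)} := by
        rw [hG', SimpleGraph.edgeSet_sdiff, SimpleGraph.edgeSet_fromEdgeSet]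
        ext e
        simp only [Set.mem_diff, Set.mem_singleton_iff, Set.mem_setOf_eq, not_and, not_not]
        constructor
        · rintro ⟨he, h2⟩
          exact ⟨he, fun hev => (G.not_isDiag_of_mem_edgeSet he (hev ▸ h2 hev))⟩
        · rintro ⟨he, h2⟩
          exact ⟨he, fun hev => absurd hev h2⟩
      have hvw : s(v, w) ∈ G.edgeSet := hadj
      have hle := card_le_of_connected G' hconn
      have hcard' : Nat.card G'.edgeSet = Nat.card G.edgeSet - 1 := by
        rw [← Set.singleton_subset_iff] at hvw
        rw [Nat.card_coe_set_eq, hedge,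
          Set.ncard_diff hvw (Set.toFinite _), Set.ncard_singleton, Nat.card_coe_set_eq]
      have hk1 : 1 ≤ Nat.card G.edgeSet := by
        rw [Nat.card_coe_set_eq]
        rw [Nat.one_le_iff_ne_zero]
        intro h0
        rw [Set.ncard_eq_zero (Set.toFinite _)] at h0
        rw [h0] at hvw
        exact hvw
      omega
  have ht : G.IsTree := ⟨h, hA⟩
  exact ⟨ht, tree_count ht⟩

end TreeLemmas
section Counting

variable {n : ℕ} {R : Finset (Fin n)}

lemma card_subsets : Nat.card ↥{W : Finset (Fin n) | W ⊆ R} = 2 ^ R.card := by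
  have h : {W : Finset (Fin n) | W ⊆ R} = ↑R.powerset := by
    ext W; simp [Finset.mem_powerset]
  rw [Nat.card_coe_set_eq, h, Set.ncard_coe_finset, Finset.card_powerset]

lemma sum_dirCount (T : SimpleGraph (Finset (Fin n))) (S : Finset (Fin n)) :
    ∑ i ∈ S, dirCount T i = {e | e ∈ T.edgeSet ∧ ∃ i ∈ S, edgeInDir i e}.ncard := by
  classical
  induction S using Finset.induction_on with
  | empty => simp
  | @insert a S ha ih =>
    rw [Finset.sum_insert ha, ih]
    have hset : {e | e ∈ T.edgeSet ∧ ∃ i ∈ insert a S, edgeInDir i e} =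
        {e | e ∈ T.edgeSet ∧ edgeInDir a e} ∪ {e | e ∈ T.edgeSet ∧ ∃ i ∈ S, edgeInDir i e} := by
      ext e
      simp only [Set.mem_setOf_eq, Set.mem_union, Finset.mem_insert]
      constructor
      · rintro ⟨he, i, (rfl | hi), hd⟩
        · exact Or.inl ⟨he, hd⟩
        · exact Or.inr ⟨he, i, hi, hd⟩
      · rintro (⟨he, hd⟩ | ⟨he, i, hi, hd⟩)
        · exact ⟨he, a, Or.inl rfl, hd⟩
        · exact ⟨he, i, Or.inr hi, hd⟩
    have hdisj : Disjoint {e | e ∈ T.edgeSet ∧ edgeInDir a e}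
        {e | e ∈ T.edgeSet ∧ ∃ i ∈ S, edgeInDir i e} := by
      rw [Set.disjoint_left]
      rintro e ⟨-, hda⟩ ⟨-, i, hi, hdi⟩
      induction e with
      | _ U V =>
        rw [edgeInDir_iff] at hda hdi
        exact ha (dir_unique hda hdi ▸ hi)
    rw [hset, Set.ncard_union_eq hdisj (Set.toFinite _) (Set.toFinite _)]
    rfl

end Counting
section Bridge

variable {n : ℕ} {R : Finset (Fin n)}

/-- Projection of a vertex to the subtype of subsets of `R`. -/
def qR (R : Finset (Fin n)) (U : Finset (Fin n)) : ↥{W : Finset (Fin n) | W ⊆ R} :=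
  ⟨U ∩ R, Finset.inter_subset_right⟩

/-- The set of edges of `T` in directions belonging to `R`. -/
def Fset (R : Finset (Fin n)) (T : SimpleGraph (Finset (Fin n))) : Set (Sym2 (Finset (Fin n))) :=
  {e | e ∈ T.edgeSet ∧ ∃ i ∈ R, edgeInDir i e}

lemma val_qR_comp (x : Sym2 (Finset (Fin n))) :
    Sym2.map Subtype.val (Sym2.map (qR R) x) = Sym2.map (fun U => U ∩ R) x := by
  rw [Sym2.map_map]; rfl

lemma mem_Fset_of_adj {T : SimpleGraph (Finset (Fin n))} (hT : T ≤ cube n)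
    {U V : Finset (Fin n)} (h : T.Adj U V) (hne : U ∩ R ≠ V ∩ R) : s(U, V) ∈ Fset R T := by
  obtain ⟨i, hiR, hd⟩ := dir_mem_of_inter_ne (hT h) hne
  exact ⟨h, i, hiR, edgeInDir_iff.mpr hd⟩

lemma inter_ne_of_mem_Fset {T : SimpleGraph (Finset (Fin n))}
    {U V : Finset (Fin n)} (h : s(U, V) ∈ Fset R T) : U ∩ R ≠ V ∩ R := by
  obtain ⟨-, i, hiR, hd⟩ := h
  exact inter_ne_of_dir_mem (edgeInDir_iff.mp hd) hiR

lemma adj_inter_cases {T : SimpleGraph (Finset (Fin n))} (hT : T ≤ cube n)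
    {U V : Finset (Fin n)} (h : T.Adj U V) : U ∩ R = V ∩ R ∨ s(U, V) ∈ Fset R T := by
  by_cases hne : U ∩ R = V ∩ R
  · exact Or.inl hne
  · exact Or.inr (mem_Fset_of_adj hT h hne)

lemma qR_map_ne {T : SimpleGraph (Finset (Fin n))}
    (hH2 : Set.InjOn (Sym2.map (· ∩ R)) (Fset R T))
    {e f : Sym2 (Finset (Fin n))} (he : e ∈ Fset R T) (hf : f ∈ Fset R T) (hne : e ≠ f) :
    Sym2.map (qR R) e ≠ Sym2.map (qR R) f := by
  intro h
  exact hne (hH2 he hf (by rw [← val_qR_comp, ← val_qR_comp, h]))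

variable {T : SimpleGraph (Finset (Fin n))} {TR : SimpleGraph ↥{W : Finset (Fin n) | W ⊆ R}}

/-- Projecting a walk avoiding an `F`-edge `e` gives reachability avoiding the
projection of `e`. -/
lemma proj_reach_avoid (hT : T ≤ cube n)
    (hH1 : ∀ U V, T.Adj U V → U ∩ R ≠ V ∩ R → TR.Adj (qR R U) (qR R V))
    (hH2 : Set.InjOn (Sym2.map (· ∩ R)) (Fset R T))
    {e : Sym2 (Finset (Fin n))} (he : e ∈ Fset R T)
    {u v : Finset (Fin n)} (p : T.Walk u v) (hp : e ∉ p.edges) :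
    (TR.deleteEdges {Sym2.map (qR R) e}).Reachable (qR R u) (qR R v) := by
  induction p with
  | nil => exact Reachable.refl _
  | @cons u a v h p ih =>
    rw [SimpleGraph.Walk.edges_cons, List.mem_cons] at hp
    push_neg at hp
    obtain ⟨hef, hep⟩ := hp
    refine Reachable.trans ?_ (ih hep)
    rcases adj_inter_cases hT h with hcase | hcase
    · rw [show qR R u = qR R a from Subtype.ext hcase]
    · refine SimpleGraph.Adj.reachable ?_
      rw [SimpleGraph.deleteEdges_adj]
      refine ⟨hH1 u a h (inter_ne_of_mem_Fset hcase), ?_⟩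
      rw [Set.mem_singleton_iff, show s(qR R u, qR R a) = Sym2.map (qR R) s(u, a) from
        (Sym2.map_pair_eq _ _ _).symm]
      exact qR_map_ne hH2 hcase he (fun hh => hef hh.symm)

lemma trail_sep (hT : T ≤ cube n)
    (hH1 : ∀ U V, T.Adj U V → U ∩ R ≠ V ∩ R → TR.Adj (qR R U) (qR R V))
    (hH2 : Set.InjOn (Sym2.map (· ∩ R)) (Fset R T))
    (hH3 : TR.IsAcyclic)
    {u v : Finset (Fin n)} (p : T.Walk u v) (hp : p.IsTrail)
    {e : Sym2 (Finset (Fin n))} (he : e ∈ Fset R T) (hmem : e ∈ p.edges) :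
    ¬ (TR.deleteEdges {Sym2.map (qR R) e}).Reachable (qR R u) (qR R v) := by
  induction p with
  | nil => simp at hmem
  | @cons u a v h p ih =>
    rw [SimpleGraph.Walk.isTrail_cons] at hp
    obtain ⟨hpt, hfp⟩ := hp
    rw [SimpleGraph.Walk.edges_cons, List.mem_cons] at hmem
    rcases hmem with rfl | hmem
    · -- e is the first edge s(u, a)
      have hne : u ∩ R ≠ a ∩ R := inter_ne_of_mem_Fset he
      have hadj : TR.Adj (qR R u) (qR R a) := hH1 u a h hne
      have hbr : TR.IsBridge s(qR R u, qR R a) :=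
        (SimpleGraph.isAcyclic_iff_forall_adj_isBridge.mp hH3) hadj
      rw [SimpleGraph.isBridge_iff] at hbr
      have hrest := proj_reach_avoid hT hH1 hH2 he p hfp
      intro hcon
      have : (TR.deleteEdges {Sym2.map (qR R) s(u, a)}).Reachable (qR R u) (qR R a) :=
        hcon.trans hrest.symm
      rw [show Sym2.map (qR R) s(u, a) = s(qR R u, qR R a) from Sym2.map_pair_eq _ _ _] at this
      exact hbr this
    · have hef : e ≠ s(u, a) := fun hh => hfp (hh ▸ hmem)
      have ihr := ih hpt hmem
      intro hcon
      apply ihr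
      refine Reachable.trans ?_ hcon
      rcases adj_inter_cases hT h with hcase | hcase
      · rw [show qR R a = qR R u from Subtype.ext hcase.symm]
      · refine (SimpleGraph.Adj.reachable ?_).symm
        rw [SimpleGraph.deleteEdges_adj]
        refine ⟨hH1 u a h (inter_ne_of_mem_Fset hcase), ?_⟩
        rw [Set.mem_singleton_iff, show s(qR R u, qR R a) = Sym2.map (qR R) s(u, a) from
          (Sym2.map_pair_eq _ _ _).symm]
        exact qR_map_ne hH2 hcase he (fun hh => hef hh.symm)

/-- A trail between two vertices of the same fiber uses no edges in directions in `R`. -/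
lemma trail_no_F (hT : T ≤ cube n)
    (hH1 : ∀ U V, T.Adj U V → U ∩ R ≠ V ∩ R → TR.Adj (qR R U) (qR R V))
    (hH2 : Set.InjOn (Sym2.map (· ∩ R)) (Fset R T))
    (hH3 : TR.IsAcyclic)
    {u v : Finset (Fin n)} (p : T.Walk u v) (hp : p.IsTrail) (huv : u ∩ R = v ∩ R) :
    ∀ e ∈ p.edges, e ∉ Fset R T := by
  intro e hmem he
  refine trail_sep hT hH1 hH2 hH3 p hp he hmem ?_
  rw [show qR R u = qR R v from Subtype.ext huv]

/-- Walking inside a fiber, avoiding a fixed edge, transfers to any graph on the fiber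
containing all such steps. -/
lemma fiber_reach_avoid (hT : T ≤ cube n) {X : Finset (Fin n)}
    {G' : SimpleGraph ↥{W : Finset (Fin n) | W ∩ R = X}} {e0 : Sym2 (Finset (Fin n))}
    (hstep : ∀ a b (ha : a ∩ R = X) (hb : b ∩ R = X), T.Adj a b → s(a, b) ≠ e0 →
      G'.Adj ⟨a, ha⟩ ⟨b, hb⟩)
    {u v : Finset (Fin n)} (p : T.Walk u v) (hn : ∀ e ∈ p.edges, e ∉ Fset R T)
    (hne : ∀ e ∈ p.edges, e ≠ e0) (hu : u ∩ R = X) :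
    ∃ hv : v ∩ R = X, G'.Reachable ⟨u, hu⟩ ⟨v, hv⟩ := by
  induction p with
  | nil => exact ⟨hu, Reachable.refl _⟩
  | @cons u a v h p ih =>
    have hfirst : s(u, a) ∈ (SimpleGraph.Walk.cons h p).edges := by
      simp [SimpleGraph.Walk.edges_cons]
    have ha : a ∩ R = X := by
      rcases adj_inter_cases hT h with hcase | hcase
      · rw [← hcase]; exact hu
      · exact absurd hcase (hn _ hfirst)
    obtain ⟨hv, hreach⟩ := ih (fun e hee => hn e (by simp [SimpleGraph.Walk.edges_cons, hee]))
      (fun e hee => hne e (by simp [SimpleGraph.Walk.edges_cons, hee])) ha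
    exact ⟨hv, (SimpleGraph.Adj.reachable (hstep u a hu ha h (hne _ hfirst))).trans hreach⟩

end Bridge
section Forward

variable {n : ℕ}

/-- The projection of `T` to `Q_R`, as a graph on the subtype of subsets of `R`. -/
def projT (R : Finset (Fin n)) (T : SimpleGraph (Finset (Fin n))) :
    SimpleGraph ↥{W : Finset (Fin n) | W ⊆ R} where
  Adj A B := A ≠ B ∧ ∃ U V : Finset (Fin n), T.Adj U V ∧ U ∩ R = A.1 ∧ V ∩ R = B.1
  symm := by
    constructor
    rintro A B ⟨hne, U, V, hUV, hU, hV⟩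
    exact ⟨hne.symm, V, U, hUV.symm, hV, hU⟩
  loopless := by
    constructor
    rintro A ⟨hne, -⟩
    exact hne rfl

variable {R : Finset (Fin n)} {T : SimpleGraph (Finset (Fin n))}

lemma projT_H1 : ∀ U V, T.Adj U V → U ∩ R ≠ V ∩ R →
    (projT R T).Adj (qR R U) (qR R V) := by
  intro U V h hne
  exact ⟨fun hc => hne (congrArg Subtype.val hc), U, V, h, rfl, rfl⟩

lemma projT_le (hT : T ≤ cube n) :
    projT R T ≤ (cube n).induce {W : Finset (Fin n) | W ⊆ R} := by
  rintro A B ⟨hne, U, V, hUV, hU, hV⟩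
  have hvne : A.1 ≠ B.1 := fun hc => hne (Subtype.ext hc)
  obtain ⟨i, hiR, hd⟩ := dir_mem_of_inter_ne (hT hUV) (by rw [hU, hV]; exact hvne)
  have : symmDiff A.1 B.1 = {i} := by
    rw [← hU, ← hV]; exact inter_symmDiff_of_dir_mem hd hiR
  exact cube_adj.mpr ⟨i, this⟩

lemma projT_reach_of_walk {U V : Finset (Fin n)} (p : T.Walk U V) :
    (projT R T).Reachable (qR R U) (qR R V) := by
  induction p with
  | nil => exact Reachable.refl _
  | @cons u a v h p ih =>
    refine Reachable.trans ?_ ih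
    by_cases hc : u ∩ R = a ∩ R
    · rw [show qR R u = qR R a from Subtype.ext hc]
    · exact (projT_H1 u a h hc).reachable

lemma qR_eq_self {A : ↥{W : Finset (Fin n) | W ⊆ R}} : qR R A.1 = A :=
  Subtype.ext (Finset.inter_eq_left.mpr A.2)

lemma projT_connected (hc : T.Connected) : (projT R T).Connected := by
  haveI : Nonempty ↥{W : Finset (Fin n) | W ⊆ R} := ⟨⟨∅, Finset.empty_subset R⟩⟩
  refine SimpleGraph.Connected.mk fun A B => ?_
  obtain ⟨p⟩ := hc.preconnected A.1 B.1
  have := projT_reach_of_walk (R := R) p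
  rwa [qR_eq_self, qR_eq_self] at this

lemma projT_edgeSet (hT : T ≤ cube n) :
    (projT R T).edgeSet = Sym2.map (qR R) '' Fset R T := by
  ext e
  induction e with
  | _ A B =>
    constructor
    · rintro ⟨hne, U, V, hUV, hU, hV⟩
      have hvne : U ∩ R ≠ V ∩ R := by
        rw [hU, hV]; exact fun hc => hne (Subtype.ext hc)
      refine ⟨s(U, V), mem_Fset_of_adj hT hUV hvne, ?_⟩
      have h1 : qR R U = A := Subtype.ext hU
      have h2 : qR R V = B := Subtype.ext hV
      rw [Sym2.map_pair_eq, h1, h2]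
    · rintro ⟨f, hf, heq⟩
      rw [← heq]
      induction f with
      | _ U V =>
        rw [Sym2.map_pair_eq, SimpleGraph.mem_edgeSet]
        exact projT_H1 U V hf.1 (inter_ne_of_mem_Fset hf)

lemma isAcyclic_induce {V : Type*} {G : SimpleGraph V} (h : G.IsAcyclic) (s : Set V) :
    (G.induce s).IsAcyclic := by
  intro v c hc
  let emb : G.induce s ↪g G := SimpleGraph.Embedding.induce s
  exact h (c.map emb.toHom) (hc.map emb.injective)

/-- Main forward lemma. -/
lemma forward_main (R : Finset (Fin n)) (hsp : IsSpanningTreeOf T (cube n))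
    (hred : ∑ i ∈ R, dirCount T i = 2 ^ R.card - 1) :
    ((projT R T).IsTree ∧ (projT R T).edgeSet = Sym2.map (qR R) '' Fset R T ∧
      Set.InjOn (Sym2.map (· ∩ R)) (Fset R T)) ∧
    (∀ (X : Finset (Fin n)), X ⊆ R →
      IsSpanningTreeOf (T.induce {W : Finset (Fin n) | W ∩ R = X})
        ((cube n).induce {W : Finset (Fin n) | W ∩ R = X})) := by
  classical
  obtain ⟨hle, hconn, hacy⟩ := hsp
  haveI : Fintype ↥{W : Finset (Fin n) | W ⊆ R} := Fintype.ofFinite _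
  have hcardV : Fintype.card ↥{W : Finset (Fin n) | W ⊆ R} = 2 ^ R.card := by
    rw [← Nat.card_eq_fintype_card]; exact card_subsets
  have hFcard : (Fset R T).ncard = 2 ^ R.card - 1 := by
    rw [← hred, sum_dirCount]; rfl
  have hEeq : (projT R T).edgeSet = Sym2.map (qR R) '' Fset R T := projT_edgeSet hle
  have hone : 1 ≤ 2 ^ R.card := Nat.one_le_two_pow
  have hcard_le : Nat.card (projT R T).edgeSet + 1 ≤ 2 ^ R.card := by
    rw [Nat.card_coe_set_eq, hEeq]
    have := Set.ncard_image_le (f := Sym2.map (qR R)) (s := Fset R T) (Set.toFinite _)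
    omega
  obtain ⟨htree, hcard_eq⟩ := isTree_of_connected_card (projT R T) (projT_connected hconn)
    (by rw [hcardV]; exact hcard_le)
  have himg_card : (Sym2.map (qR R) '' Fset R T).ncard = (Fset R T).ncard := by
    rw [← hEeq, ← Nat.card_coe_set_eq]
    rw [hcardV] at hcard_eq
    omega
  have hinjq : Set.InjOn (Sym2.map (qR R)) (Fset R T) :=
    Set.injOn_of_ncard_image_eq himg_card (Set.toFinite _)
  have hinj : Set.InjOn (Sym2.map (· ∩ R)) (Fset R T) := by
    intro x hx y hy hxy
    refine hinjq hx hy ?_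
    apply Sym2.map.injective Subtype.val_injective
    rw [val_qR_comp, val_qR_comp]
    exact hxy
  refine ⟨⟨htree, hEeq, hinj⟩, ?_⟩
  intro X hX
  have hH1 := projT_H1 (R := R) (T := T)
  have hH3 : (projT R T).IsAcyclic := htree.2
  constructor
  · intro a b hab
    exact hle hab
  constructor
  · -- connectedness of the fiber
    haveI : Nonempty ↥{W : Finset (Fin n) | W ∩ R = X} :=
      ⟨⟨X, by simpa [Set.mem_setOf_eq] using Finset.inter_eq_left.mpr hX⟩⟩
    refine SimpleGraph.Connected.mk fun u v => ?_
    obtain ⟨p0⟩ := hconn.preconnected u.1 v.1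
    let p := p0.toPath
    have hpt : (p : T.Walk u.1 v.1).IsTrail := p.2.isTrail
    have huv : u.1 ∩ R = v.1 ∩ R := by
      have hu : u.1 ∩ R = X := u.2
      have hv : v.1 ∩ R = X := v.2
      rw [hu, hv]
    have hnoF : ∀ e ∈ (p : T.Walk u.1 v.1).edges, e ∉ Fset R T :=
      trail_no_F hle hH1 hinj hH3 _ hpt huv
    have hu : u.1 ∩ R = X := u.2
    obtain ⟨hv, hreach⟩ := fiber_reach_avoid (G' := T.induce {W : Finset (Fin n) | W ∩ R = X})
      (e0 := s(u.1, u.1)) hle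
      (fun a b ha hb hadj _ => hadj)
      (p : T.Walk u.1 v.1) hnoF
      (fun e he heq => by
        have hmem := (p : T.Walk u.1 v.1).edges_subset_edgeSet he
        rw [heq] at hmem
        exact T.not_isDiag_of_mem_edgeSet hmem (Sym2.mk_isDiag_iff.mpr rfl))
      hu
    have : (⟨u.1, hu⟩ : ↥{W : Finset (Fin n) | W ∩ R = X}) = u := Subtype.ext rfl
    rw [this] at hreach
    have : (⟨v.1, hv⟩ : ↥{W : Finset (Fin n) | W ∩ R = X}) = v := Subtype.ext rfl
    rwa [this] at hreach
  · exact isAcyclic_induce hacy _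

end Forward
section Backward

variable {n : ℕ} {R : Finset (Fin n)}

variable {F : Set (Sym2 (Finset (Fin n)))}
  {t : (X : Finset (Fin n)) → X ⊆ R → SimpleGraph ↥{W : Finset (Fin n) | W ∩ R = X}}

/-- The union of the fiber edge sets. -/
def fiberE (R : Finset (Fin n))
    (t : (X : Finset (Fin n)) → X ⊆ R → SimpleGraph ↥{W : Finset (Fin n) | W ∩ R = X}) :
    Set (Sym2 (Finset (Fin n))) :=
  ⋃ (X : Finset (Fin n)) (hX : X ⊆ R), Sym2.map Subtype.val '' (t X hX).edgeSet

lemma mem_fiberE_iff {e : Sym2 (Finset (Fin n))} :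
    e ∈ fiberE R t ↔ ∃ (X : Finset (Fin n)) (hX : X ⊆ R),
      e ∈ Sym2.map Subtype.val '' (t X hX).edgeSet := by
  simp [fiberE]

section BackwardMain

variable (hfib : ∀ (X : Finset (Fin n)) (hX : X ⊆ R),
    IsSpanningTreeOf (t X hX) ((cube n).induce {W : Finset (Fin n) | W ∩ R = X}))
  (hFcond : ∀ e ∈ F, e ∈ (cube n).edgeSet ∧ ∃ i ∈ R, edgeInDir i e)

include hfib in
lemma fiberE_subset_cube : fiberE R t ⊆ (cube n).edgeSet := by
  intro e he
  rw [mem_fiberE_iff] at he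
  obtain ⟨X, hX, f, hf, heq⟩ := he
  induction f with
  | _ a b =>
    rw [Sym2.map_pair_eq] at heq
    rw [← heq, SimpleGraph.mem_edgeSet]
    exact (hfib X hX).1 hf

include hfib hFcond in
lemma cube_E : F ∪ fiberE R t ⊆ (cube n).edgeSet := by
  intro e he
  rcases he with he | he
  · exact (hFcond e he).1
  · exact fiberE_subset_cube hfib he

include hfib hFcond in
lemma edgeSet_T : (SimpleGraph.fromEdgeSet (F ∪ fiberE R t)).edgeSet = F ∪ fiberE R t := by
  rw [SimpleGraph.edgeSet_fromEdgeSet]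
  ext e
  simp only [Set.mem_diff, Set.mem_setOf_eq]
  refine ⟨fun h => h.1, fun h => ⟨h, fun hd => ?_⟩⟩
  exact (cube n).not_isDiag_of_mem_edgeSet (cube_E hfib hFcond h) hd

include hfib hFcond in
lemma T_le_cube : SimpleGraph.fromEdgeSet (F ∪ fiberE R t) ≤ cube n := by
  intro a b hab
  rw [SimpleGraph.fromEdgeSet_adj] at hab
  have := cube_E hfib hFcond hab.1
  rwa [SimpleGraph.mem_edgeSet] at this

lemma fiberE_inter_eq {a b : Finset (Fin n)} (h : s(a, b) ∈ fiberE R t) : a ∩ R = b ∩ R := by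
  rw [mem_fiberE_iff] at h
  obtain ⟨X, hX, f, hf, heq⟩ := h
  induction f with
  | _ A B =>
    rw [Sym2.map_pair_eq, Sym2.eq_iff] at heq
    have hA : A.1 ∩ R = X := A.2
    have hB : B.1 ∩ R = X := B.2
    rcases heq with ⟨rfl, rfl⟩ | ⟨rfl, rfl⟩ <;> rw [hA, hB]

lemma F_inter_ne (hFcond : ∀ e ∈ F, e ∈ (cube n).edgeSet ∧ ∃ i ∈ R, edgeInDir i e)
    {a b : Finset (Fin n)} (h : s(a, b) ∈ F) : a ∩ R ≠ b ∩ R := by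
  obtain ⟨-, i, hiR, hd⟩ := hFcond _ h
  exact inter_ne_of_dir_mem (edgeInDir_iff.mp hd) hiR

include hfib hFcond in
/-- Adjacency within a fiber corresponds to adjacency in the fiber tree. -/
lemma fiber_adj_iff {X : Finset (Fin n)} (hX : X ⊆ R) {a b : Finset (Fin n)}
    (ha : a ∩ R = X) (hb : b ∩ R = X) :
    (SimpleGraph.fromEdgeSet (F ∪ fiberE R t)).Adj a b ↔ (t X hX).Adj ⟨a, ha⟩ ⟨b, hb⟩ := by
  constructor
  · intro h
    rw [SimpleGraph.fromEdgeSet_adj] at h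
    obtain ⟨hmem, hne⟩ := h
    rcases hmem with hmem | hmem
    · exact absurd (ha.trans hb.symm) (F_inter_ne hFcond hmem)
    · rw [mem_fiberE_iff] at hmem
      obtain ⟨X', hX', f, hf, heq⟩ := hmem
      induction f with
      | _ A B =>
        rw [Sym2.map_pair_eq, Sym2.eq_iff] at heq
        rcases heq with ⟨h1, h2⟩ | ⟨h1, h2⟩
        · have hXX : X' = X := by rw [← ha, ← h1]; exact A.2.symm
          subst hXX
          have hA : A = ⟨a, ha⟩ := Subtype.ext h1
          have hB : B = ⟨b, hb⟩ := Subtype.ext h2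
          have : hX' = hX := rfl
          rw [← hA, ← hB]
          rwa [← this]
        · have hXX : X' = X := by rw [← hb, ← h1]; exact A.2.symm
          subst hXX
          have hA : A = ⟨b, hb⟩ := Subtype.ext h1
          have hB : B = ⟨a, ha⟩ := Subtype.ext h2
          have : hX' = hX := rfl
          rw [← hA, ← hB, ← this]
          exact hf.symm
  · intro h
    rw [SimpleGraph.fromEdgeSet_adj]
    constructor
    · right
      rw [mem_fiberE_iff]
      refine ⟨X, hX, s(⟨a, ha⟩, ⟨b, hb⟩), h, ?_⟩
      rw [Sym2.map_pair_eq]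
    · intro hab
      exact h.ne (Subtype.ext hab)

include hfib hFcond in
lemma Fset_T_eq : Fset R (SimpleGraph.fromEdgeSet (F ∪ fiberE R t)) = F := by
  ext e
  constructor
  · rintro ⟨he, i, hiR, hd⟩
    rw [edgeSet_T hfib hFcond] at he
    rcases he with he | he
    · exact he
    · exfalso
      induction e with
      | _ a b =>
        exact inter_ne_of_dir_mem (edgeInDir_iff.mp hd) hiR (fiberE_inter_eq he)
  · intro he
    refine ⟨?_, (hFcond e he).2⟩
    rw [edgeSet_T hfib hFcond]
    exact Or.inl he

include hfib in
lemma fiber_reach_T {X : Finset (Fin n)} (hX : X ⊆ R) (U V : Finset (Fin n))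
    (hU : U ∩ R = X) (hV : V ∩ R = X)
    (hFc : ∀ e ∈ F, e ∈ (cube n).edgeSet ∧ ∃ i ∈ R, edgeInDir i e) :
    (SimpleGraph.fromEdgeSet (F ∪ fiberE R t)).Reachable U V := by
  let hom : t X hX →g SimpleGraph.fromEdgeSet (F ∪ fiberE R t) :=
    ⟨Subtype.val, fun {x y} hxy => (fiber_adj_iff hfib hFc hX x.2 y.2).mpr (by
      have hx : (⟨x.1, x.2⟩ : ↥{W : Finset (Fin n) | W ∩ R = X}) = x := Subtype.ext rfl
      have hy : (⟨y.1, y.2⟩ : ↥{W : Finset (Fin n) | W ∩ R = X}) = y := Subtype.ext rfl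
      rwa [hx, hy])⟩
  have := (hfib X hX).2.isConnected.preconnected ⟨U, hU⟩ ⟨V, hV⟩
  exact (this.map hom : _)

end BackwardMain

end Backward
section Backward2

variable {n : ℕ} {R : Finset (Fin n)}
  {F : Set (Sym2 (Finset (Fin n)))}
  {t : (X : Finset (Fin n)) → X ⊆ R → SimpleGraph ↥{W : Finset (Fin n) | W ∩ R = X}}
  {TR : SimpleGraph ↥{W : Finset (Fin n) | W ⊆ R}}

variable (hfib : ∀ (X : Finset (Fin n)) (hX : X ⊆ R),
    IsSpanningTreeOf (t X hX) ((cube n).induce {W : Finset (Fin n) | W ∩ R = X}))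
  (hFcond : ∀ e ∈ F, e ∈ (cube n).edgeSet ∧ ∃ i ∈ R, edgeInDir i e)
  (hTRim : Sym2.map (Subtype.val) '' TR.edgeSet = Sym2.map (· ∩ R) '' F)

include hfib hFcond hTRim in
lemma TR_H1 : ∀ U V, (SimpleGraph.fromEdgeSet (F ∪ fiberE R t)).Adj U V → U ∩ R ≠ V ∩ R →
    TR.Adj (qR R U) (qR R V) := by
  intro U V h hne
  rw [SimpleGraph.fromEdgeSet_adj] at h
  have hF : s(U, V) ∈ F := by
    rcases h.1 with hm | hm
    · exact hm
    · exact absurd (fiberE_inter_eq hm) hne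
  have : Sym2.map (· ∩ R) s(U, V) ∈ Sym2.map (Subtype.val) '' TR.edgeSet := by
    rw [hTRim]; exact ⟨s(U, V), hF, rfl⟩
  obtain ⟨g, hg, heq⟩ := this
  induction g with
  | _ A B =>
    rw [Sym2.map_pair_eq, Sym2.map_pair_eq, Sym2.eq_iff] at heq
    rcases heq with ⟨h1, h2⟩ | ⟨h1, h2⟩
    · have hA : qR R U = A := Subtype.ext h1.symm
      have hB : qR R V = B := Subtype.ext h2.symm
      rw [hA, hB]; exact hg
    · have hA : qR R V = A := Subtype.ext h1.symm
      have hB : qR R U = B := Subtype.ext h2.symm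
      rw [hA, hB]; exact hg.symm

include hfib hFcond hTRim in
lemma T_connected (hTRconn : TR.Connected) :
    (SimpleGraph.fromEdgeSet (F ∪ fiberE R t)).Connected := by
  set T := SimpleGraph.fromEdgeSet (F ∪ fiberE R t) with hT
  have claim : ∀ (A B : ↥{W : Finset (Fin n) | W ⊆ R}) (w : TR.Walk A B)
      (U V : Finset (Fin n)), U ∩ R = A.1 → V ∩ R = B.1 → T.Reachable U V := by
    intro A B w
    induction w with
    | @nil A =>
      intro U V hU hV
      exact fiber_reach_T hfib A.2 U V hU hV hFcond
    | @cons A C B h w' ih =>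
      intro U V hU hV
      have hg : s(A, C) ∈ TR.edgeSet := h
      have : Sym2.map (Subtype.val) s(A, C) ∈ Sym2.map (· ∩ R) '' F := by
        rw [← hTRim]; exact ⟨s(A, C), hg, rfl⟩
      rw [Sym2.map_pair_eq] at this
      obtain ⟨f, hfF, hfeq⟩ := this
      have hedge : f ∈ T.edgeSet := by
        rw [hT, edgeSet_T hfib hFcond]; exact Or.inl hfF
      induction f with
      | _ U' V' =>
        rw [Sym2.map_pair_eq, Sym2.eq_iff] at hfeq
        rcases hfeq with ⟨h1, h2⟩ | ⟨h1, h2⟩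
        · refine (fiber_reach_T hfib A.2 U U' hU h1 hFcond).trans
            (Reachable.trans ?_ (ih V' V h2 hV))
          exact ((SimpleGraph.mem_edgeSet T).mp hedge).reachable
        · refine (fiber_reach_T hfib A.2 U V' hU h2 hFcond).trans
            (Reachable.trans ?_ (ih U' V h1 hV))
          exact ((SimpleGraph.mem_edgeSet T).mp hedge).symm.reachable
  refine SimpleGraph.Connected.mk fun U V => ?_
  obtain ⟨w⟩ := hTRconn.preconnected (qR R U) (qR R V)
  exact claim _ _ w U V rfl rfl

include hfib hFcond hTRim in
lemma T_acyclic (hinj : Set.InjOn (Sym2.map (· ∩ R)) F) (hTRacy : TR.IsAcyclic) :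
    (SimpleGraph.fromEdgeSet (F ∪ fiberE R t)).IsAcyclic := by
  set T := SimpleGraph.fromEdgeSet (F ∪ fiberE R t) with hTdef
  have hle : T ≤ cube n := T_le_cube hfib hFcond
  have hinj' : Set.InjOn (Sym2.map (· ∩ R)) (Fset R T) := by
    rw [hTdef, Fset_T_eq hfib hFcond]; exact hinj
  have hH1 := TR_H1 hfib hFcond hTRim
  rw [SimpleGraph.isAcyclic_iff_forall_adj_isBridge]
  intro u v hadj
  rw [SimpleGraph.isBridge_iff]
  rintro ⟨p0⟩
  -- transfer the walk to `T`
  have hsub : ∀ e ∈ p0.edges, e ∈ T.edgeSet := fun e he =>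
    SimpleGraph.edgeSet_mono sdiff_le (p0.edges_subset_edgeSet he)
  set p : T.Walk u v := p0.transfer T hsub with hpdef
  have he0 : s(u, v) ∉ p.edges := by
    rw [hpdef, SimpleGraph.Walk.edges_transfer]
    intro hmem
    have := p0.edges_subset_edgeSet hmem
    rw [SimpleGraph.deleteEdges, SimpleGraph.edgeSet_sdiff, SimpleGraph.edgeSet_fromEdgeSet] at this
    refine this.2 ⟨rfl, ?_⟩
    exact (cube n).not_isDiag_of_mem_edgeSet ((SimpleGraph.mem_edgeSet (cube n)).mpr (hle hadj))
  set p2 : T.Walk u v := (p.toPath : T.Walk u v) with hp2def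
  have hp2trail : p2.IsTrail := p.toPath.2.isTrail
  have hp2sub : p2.edges ⊆ p.edges := p.edges_toPath_subset
  have he02 : s(u, v) ∉ p2.edges := fun hc => he0 (hp2sub hc)
  have hmemE : s(u, v) ∈ F ∪ fiberE R t := by
    have : s(u, v) ∈ T.edgeSet := hadj
    rwa [hTdef, edgeSet_T hfib hFcond] at this
  rcases hmemE with hF | hfE
  · -- the deleted edge is an `F`-edge
    have hne : u ∩ R ≠ v ∩ R := F_inter_ne hFcond hF
    have heF : s(u, v) ∈ Fset R T := by
      rw [hTdef, Fset_T_eq hfib hFcond]; exact hF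
    have hreach := proj_reach_avoid hle hH1 hinj' heF p2 he02
    have hbr := (SimpleGraph.isAcyclic_iff_forall_adj_isBridge.mp hTRacy) (hH1 u v hadj hne)
    rw [SimpleGraph.isBridge_iff] at hbr
    refine hbr ?_
    rw [show Sym2.map (qR R) s(u, v) = s(qR R u, qR R v) from Sym2.map_pair_eq _ _ _] at hreach
    exact hreach
  · -- the deleted edge is a fiber edge
    have huv : u ∩ R = v ∩ R := fiberE_inter_eq hfE
    have hX : u ∩ R ⊆ R := Finset.inter_subset_right
    have hv : v ∩ R = u ∩ R := huv.symm
    have hadj' : (t (u ∩ R) hX).Adj ⟨u, rfl⟩ ⟨v, hv⟩ :=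
      (fiber_adj_iff hfib hFcond hX rfl hv).mp hadj
    have hbrt := (SimpleGraph.isAcyclic_iff_forall_adj_isBridge.mp
      (hfib (u ∩ R) hX).2.IsAcyclic) hadj'
    rw [SimpleGraph.isBridge_iff] at hbrt
    have hnoF : ∀ e ∈ p2.edges, e ∉ Fset R T :=
      trail_no_F hle hH1 hinj' hTRacy p2 hp2trail huv
    have hne0 : ∀ e ∈ p2.edges, e ≠ s(u, v) := fun e he heq => he02 (heq ▸ he)
    obtain ⟨hv', hreach⟩ := fiber_reach_avoid
      (G' := (t (u ∩ R) hX).deleteEdges {s(⟨u, rfl⟩, ⟨v, hv⟩)}) (e0 := s(u, v)) hle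
      (fun a b ha hb hab hne => by
        rw [SimpleGraph.deleteEdges_adj]
        refine ⟨(fiber_adj_iff hfib hFcond hX ha hb).mp hab, ?_⟩
        rw [Set.mem_singleton_iff]
        intro hc
        apply hne
        have := congrArg (Sym2.map (Subtype.val :
          ↥{W : Finset (Fin n) | W ∩ R = u ∩ R} → Finset (Fin n))) hc
        rwa [Sym2.map_pair_eq, Sym2.map_pair_eq] at this)
      p2 hnoF hne0 rfl
    have hfix : (⟨v, hv'⟩ : ↥{W : Finset (Fin n) | W ∩ R = u ∩ R}) = ⟨v, hv⟩ :=
      Subtype.ext rfl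
    rw [hfix] at hreach
    exact hbrt hreach

end Backward2
section Assembly

variable {n : ℕ} {R : Finset (Fin n)}

lemma decompose_adj_mono {T T' : SimpleGraph (Finset (Fin n))} (hT : T ≤ cube n)
    (heq : decompose n R T = decompose n R T') {u v : Finset (Fin n)} (h : T.Adj u v) :
    T'.Adj u v := by
  have h1eq : Fset R T = Fset R T' := congrArg Prod.fst heq
  have h2eq : (fun (X : Finset (Fin n)) (_ : X ⊆ R) =>
      T.induce {W : Finset (Fin n) | W ∩ R = X}) =
      (fun (X : Finset (Fin n)) (_ : X ⊆ R) =>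
      T'.induce {W : Finset (Fin n) | W ∩ R = X}) := congrArg Prod.snd heq
  rcases adj_inter_cases hT h with hc | hc
  · have hfun := congrFun (congrFun h2eq (u ∩ R)) Finset.inter_subset_right
    have hadj : (T.induce {W : Finset (Fin n) | W ∩ R = u ∩ R}).Adj ⟨u, rfl⟩ ⟨v, hc.symm⟩ := h
    rw [hfun] at hadj
    exact hadj
  · have : s(u, v) ∈ Fset R T' := h1eq ▸ hc
    exact (SimpleGraph.mem_edgeSet T').mp this.1

end Assembly
/-- Theorem: decomposition of trees reducing over `R` is a bijection.
`T ↦ (F_T, (T(R,X))_{X ⊆ R})` is a bijection from the spanning trees of `Q_n` reducing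
over `R` onto the pairs `(F, (T^X))` such that each `T^X` is a spanning tree of
`Q_n(R,X)`, `F` consists of edges of `Q_n` in directions in `R` on which `π_R` is
injective, and `π_R(F)` is the edge set of a spanning tree of `Q_R`. -/
theorem stmt11 (n : ℕ) (R : Finset (Fin n)) (hR1 : R.Nonempty) (hR2 : R ≠ Finset.univ) :
    Set.BijOn (decompose n R)
      {T | IsSpanningTreeOf T (cube n) ∧ ReducesOver (fun i => dirCount T i) R}
      {p | (∀ (X : Finset (Fin n)) (hX : X ⊆ R),
              IsSpanningTreeOf (p.2 X hX)
                ((cube n).induce {W : Finset (Fin n) | W ∩ R = X})) ∧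
           (∀ e ∈ p.1, e ∈ (cube n).edgeSet ∧ ∃ i ∈ R, edgeInDir i e) ∧
           Set.InjOn (Sym2.map (· ∩ R)) p.1 ∧
           (∃ TR : SimpleGraph ↥{W : Finset (Fin n) | W ⊆ R},
              IsSpanningTreeOf TR ((cube n).induce {W : Finset (Fin n) | W ⊆ R}) ∧
              Sym2.map (Subtype.val) '' TR.edgeSet = Sym2.map (· ∩ R) '' p.1)} := by
  classical
  refine ⟨?_, ?_, ?_⟩
  · -- MapsTo
    rintro T ⟨hsp, hred⟩
    have hred' : ∑ i ∈ R, dirCount T i = 2 ^ R.card - 1 := hred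
    obtain ⟨⟨htree, hEeq, hinj⟩, hfib⟩ := forward_main R hsp hred'
    refine ⟨fun X hX => hfib X hX, ?_, ?_, ?_⟩
    · rintro e ⟨he, hdir⟩
      exact ⟨SimpleGraph.edgeSet_mono hsp.1 he, hdir⟩
    · exact hinj
    · refine ⟨projT R T, ⟨projT_le hsp.1, htree⟩, ?_⟩
      show Sym2.map Subtype.val '' (projT R T).edgeSet = Sym2.map (· ∩ R) '' Fset R T
      rw [hEeq, Set.image_image]
      exact Set.image_congr fun x _ => val_qR_comp x
  · -- InjOn
    rintro T1 ⟨hsp1, -⟩ T2 ⟨hsp2, -⟩ heq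
    ext u v
    constructor
    · exact decompose_adj_mono hsp1.1 heq
    · exact decompose_adj_mono hsp2.1 heq.symm
  · -- SurjOn
    rintro p ⟨hfib, hFcond, hinj, TR, hTRsp, hTRim⟩
    refine ⟨SimpleGraph.fromEdgeSet (p.1 ∪ fiberE R p.2), ⟨⟨?_, ?_, ?_⟩, ?_⟩, ?_⟩
    · exact T_le_cube hfib hFcond
    · exact T_connected hfib hFcond hTRim hTRsp.2.isConnected
    · exact T_acyclic hfib hFcond hTRim hinj hTRsp.2.IsAcyclic
    · -- ReducesOver
      show ∑ i ∈ R, dirCount (SimpleGraph.fromEdgeSet (p.1 ∪ fiberE R p.2)) i =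
        2 ^ R.card - 1
      haveI : Fintype ↥{W : Finset (Fin n) | W ⊆ R} := Fintype.ofFinite _
      have h3 : Nat.card TR.edgeSet + 1 = 2 ^ R.card := by
        rw [tree_count hTRsp.2, ← Nat.card_eq_fintype_card, card_subsets]
      have h2 : (Sym2.map (Subtype.val) '' TR.edgeSet).ncard = Nat.card TR.edgeSet := by
        rw [Set.ncard_image_of_injective _ (Sym2.map.injective Subtype.val_injective),
          Nat.card_coe_set_eq]
      rw [hTRim, Set.ncard_image_of_injOn hinj] at h2
      rw [sum_dirCount]
      have hFset := Fset_T_eq hfib hFcond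
      rw [show {e | e ∈ (SimpleGraph.fromEdgeSet (p.1 ∪ fiberE R p.2)).edgeSet ∧
        ∃ i ∈ R, edgeInDir i e} = Fset R (SimpleGraph.fromEdgeSet (p.1 ∪ fiberE R p.2)) from
        rfl, hFset, h2]
      omega
    · -- decompose equals p
      have hfst : Fset R (SimpleGraph.fromEdgeSet (p.1 ∪ fiberE R p.2)) = p.1 :=
        Fset_T_eq hfib hFcond
      refine Prod.ext hfst ?_
      funext X hX
      ext ⟨a, ha⟩ ⟨b, hb⟩
      show (SimpleGraph.fromEdgeSet (p.1 ∪ fiberE R p.2)).Adj a b ↔ (p.2 X hX).Adj ⟨a, ha⟩ ⟨b, hb⟩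
      exact fiber_adj_iff hfib hFcond hX ha hb
end

section
/- Let R be a proper nonempty subset of [n], let T be a spanning tree of Q_n that reduces over R, and let e be an edge of T in a direction j ∈ R. Then: (a) for any i ∉ R, e is i-slidable in T; and (b) for any i ∈ R with i ≠ j, e is i-slidable in T if and only if π_R(e) is i-slidable as an edge of the spanning tree π_R(T) of Q_R. -/
open SimpleGraph
set_option linter.unusedSectionVars false

section Core
variable {V : Type*} [Fintype V] [DecidableEq V]

lemma reach_of_adj_reach {G G' : SimpleGraph V} (h : ∀ a b, G.Adj a b → G'.Reachable a b)
    {x y : V} (hxy : G.Reachable x y) : G'.Reachable x y := by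
  obtain ⟨w⟩ := hxy
  induction w with
  | nil => exact Reachable.refl _
  | cons ha p ih => exact (h _ _ ha).trans ih

lemma reach_add_edge {E : Set (Sym2 V)} {a b x y : V}
    (h : (SimpleGraph.fromEdgeSet (E ∪ {s(a,b)})).Reachable x y) :
    (fromEdgeSet E).Reachable x y ∨
      ((fromEdgeSet E).Reachable x a ∧ (fromEdgeSet E).Reachable b y) ∨
      ((fromEdgeSet E).Reachable x b ∧ (fromEdgeSet E).Reachable a y) := by
  obtain ⟨w⟩ := h
  induction w with
  | nil => exact Or.inl (Reachable.refl _)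
  | @cons u v w hadj p ih =>
    rw [fromEdgeSet_adj] at hadj
    obtain ⟨hmem, hne⟩ := hadj
    rcases hmem with hmem | hmem
    · have hA : (fromEdgeSet E).Reachable u v := ((fromEdgeSet_adj _).mpr ⟨hmem, hne⟩).reachable
      rcases ih with h1 | ⟨h1, h2⟩ | ⟨h1, h2⟩
      · exact Or.inl (hA.trans h1)
      · exact Or.inr (Or.inl ⟨hA.trans h1, h2⟩)
      · exact Or.inr (Or.inr ⟨hA.trans h1, h2⟩)
    · simp only [Set.mem_singleton_iff, Sym2.eq_iff] at hmem
      rcases hmem with ⟨rfl, rfl⟩ | ⟨rfl, rfl⟩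
      · rcases ih with h1 | ⟨h1, h2⟩ | ⟨h1, h2⟩
        · exact Or.inr (Or.inl ⟨Reachable.refl _, h1⟩)
        · exact Or.inl (h1.symm.trans h2)
        · exact Or.inl h2
      · rcases ih with h1 | ⟨h1, h2⟩ | ⟨h1, h2⟩
        · exact Or.inr (Or.inr ⟨Reachable.refl _, h1⟩)
        · exact Or.inl h2
        · exact Or.inl (h1.symm.trans h2)


lemma map_spanning_surjective {G G' : SimpleGraph V} (h : G ≤ G') :
    Function.Surjective (ConnectedComponent.map (Hom.ofLE h)) := by
  intro C
  refine C.ind (fun v => ⟨G.connectedComponentMk v, ?_⟩)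
  rfl

lemma fromEdgeSet_diff_diag_self (E : Set (Sym2 V)) (g : Sym2 V) (hg : g.IsDiag) :
    fromEdgeSet (E \ {g}) = fromEdgeSet E := by
  ext x y
  simp only [fromEdgeSet_adj, Set.mem_diff, Set.mem_singleton_iff]
  constructor
  · rintro ⟨⟨h1, -⟩, h2⟩; exact ⟨h1, h2⟩
  · rintro ⟨h1, h2⟩
    refine ⟨⟨h1, fun hEq => ?_⟩, h2⟩
    rw [← hEq] at hg
    exact h2 (Sym2.isDiag_iff_proj_eq |>.mp hg)

lemma nc_remove_le (E : Set (Sym2 V)) (g : Sym2 V) :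
    Nat.card (fromEdgeSet (E \ {g})).ConnectedComponent ≤
      Nat.card (fromEdgeSet E).ConnectedComponent + 1 := by
  by_cases hg : g ∈ E
  swap
  · rw [Set.diff_singleton_eq_self hg]; omega
  by_cases hd : g.IsDiag
  · rw [fromEdgeSet_diff_diag_self E g hd]; omega
  induction g using Sym2.ind with | _ a b =>
  have hab : a ≠ b := fun h => hd (by simp [h])
  set S := fromEdgeSet (E \ {s(a,b)}) with hS
  set B := fromEdgeSet E with hB
  have hle : S ≤ B := fromEdgeSet_mono Set.diff_subset
  set m := ConnectedComponent.map (Hom.ofLE hle) with hm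
  have hmk : ∀ x : V, m (S.connectedComponentMk x) = B.connectedComponentMk x := by
    intro x; rfl
  have key : ∀ C C' : S.ConnectedComponent, m C = m C' →
      C = C' ∨ (S.connectedComponentMk a ≠ S.connectedComponentMk b ∧
        ((C = S.connectedComponentMk a ∧ C' = S.connectedComponentMk b) ∨
         (C = S.connectedComponentMk b ∧ C' = S.connectedComponentMk a))) := by
    intro C C'
    refine C.ind (fun x => C'.ind (fun y => ?_))
    intro hxy
    rw [hmk, hmk, ConnectedComponent.eq] at hxy
    have hE : E = (E \ {s(a,b)}) ∪ {s(a,b)} := by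
      rw [Set.diff_union_self, Set.union_eq_self_of_subset_right (by simpa using hg)]
    rw [hB, hE] at hxy
    rcases reach_add_edge hxy with h1 | ⟨h1, h2⟩ | ⟨h1, h2⟩
    · exact Or.inl (ConnectedComponent.eq.mpr h1)
    · by_cases hCab : S.connectedComponentMk a = S.connectedComponentMk b
      · refine Or.inl ?_
        rw [ConnectedComponent.eq] at hCab ⊢
        exact (h1.trans hCab).trans h2
      · exact Or.inr ⟨hCab, Or.inl ⟨ConnectedComponent.eq.mpr h1, (ConnectedComponent.eq.mpr h2).symm⟩⟩
    · by_cases hCab : S.connectedComponentMk a = S.connectedComponentMk b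
      · refine Or.inl ?_
        rw [ConnectedComponent.eq] at hCab ⊢
        exact (h1.trans hCab.symm).trans h2
      · exact Or.inr ⟨hCab, Or.inr ⟨ConnectedComponent.eq.mpr h1, (ConnectedComponent.eq.mpr h2).symm⟩⟩
  classical
  set F : S.ConnectedComponent → B.ConnectedComponent ⊕ Unit := fun C =>
    if C = S.connectedComponentMk b ∧ S.connectedComponentMk a ≠ S.connectedComponentMk b
    then Sum.inr () else Sum.inl (m C) with hF
  have hFinj : Function.Injective F := by
    intro C C' hCC'
    by_contra hne
    by_cases h1 : C = S.connectedComponentMk b ∧ S.connectedComponentMk a ≠ S.connectedComponentMk b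
    · by_cases h2 : C' = S.connectedComponentMk b ∧ S.connectedComponentMk a ≠ S.connectedComponentMk b
      · exact hne (h1.1.trans h2.1.symm)
      · rw [hF] at hCC'; simp only [if_pos h1, if_neg h2] at hCC'; cases hCC'
    · by_cases h2 : C' = S.connectedComponentMk b ∧ S.connectedComponentMk a ≠ S.connectedComponentMk b
      · rw [hF] at hCC'; simp only [if_pos h2, if_neg h1] at hCC'; cases hCC'
      · rw [hF] at hCC'; simp only [if_neg h1, if_neg h2] at hCC'
        rcases key C C' (Sum.inl_injective hCC') with h | ⟨hab', h⟩
        · exact hne h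
        · rcases h with ⟨rfl, rfl⟩ | ⟨rfl, rfl⟩
          · exact h2 ⟨rfl, hab'⟩
          · exact h1 ⟨rfl, hab'⟩
  calc Nat.card S.ConnectedComponent ≤ Nat.card (B.ConnectedComponent ⊕ Unit) :=
        Nat.card_le_card_of_injective F hFinj
    _ = Nat.card B.ConnectedComponent + 1 := by rw [Nat.card_sum]; simp

lemma nc_bot_card : Nat.card (⊥ : SimpleGraph V).ConnectedComponent = Fintype.card V := by
  rw [← Nat.card_eq_fintype_card]
  refine (Nat.card_eq_of_bijective (fun v => (⊥ : SimpleGraph V).connectedComponentMk v) ⟨?_, ?_⟩).symm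
  · intro x y h
    rw [ConnectedComponent.eq, reachable_bot] at h
    exact h
  · intro C; exact C.ind (fun v => ⟨v, rfl⟩)

lemma card_le_nc_add (F : Finset (Sym2 V)) :
    Fintype.card V ≤ Nat.card (fromEdgeSet (F : Set (Sym2 V))).ConnectedComponent + F.card := by
  classical
  induction F using Finset.induction with
  | empty => simp only [Finset.coe_empty, fromEdgeSet_empty, Finset.card_empty, add_zero, nc_bot_card]; exact le_refl _
  | @insert g F hg ih =>
    have hset : ((insert g F : Finset (Sym2 V)) : Set (Sym2 V)) \ {g} = (F : Set (Sym2 V)) := by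
      simp only [Finset.coe_insert]
      exact Set.insert_diff_self_of_notMem (by simpa using hg)
    rw [Finset.card_insert_of_notMem hg]
    calc Fintype.card V ≤ Nat.card (fromEdgeSet (F : Set (Sym2 V))).ConnectedComponent + F.card := ih
      _ ≤ (Nat.card (fromEdgeSet ((insert g F : Finset (Sym2 V)) : Set (Sym2 V))).ConnectedComponent + 1) + F.card := by
          rw [← hset]; exact Nat.add_le_add_right (nc_remove_le _ _) _
      _ = Nat.card (fromEdgeSet ((insert g F : Finset (Sym2 V)) : Set (Sym2 V))).ConnectedComponent + (F.card + 1) := by omega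


lemma sdiff_fromEdgeSet_eq (G : SimpleGraph V) (g : Sym2 V) :
    G \ fromEdgeSet {g} = fromEdgeSet (G.edgeSet \ {g}) := by
  ext x y
  simp only [sdiff_adj, fromEdgeSet_adj, Set.mem_diff, Set.mem_singleton_iff, mem_edgeSet]
  constructor
  · rintro ⟨h1, h2⟩
    exact ⟨⟨h1, fun he => h2 ⟨he, h1.ne⟩⟩, h1.ne⟩
  · rintro ⟨⟨h1, h2⟩, h3⟩
    exact ⟨h1, fun hc => h2 hc.1⟩

lemma isAcyclic_mono' {G H : SimpleGraph V} (h : G ≤ H) (hH : H.IsAcyclic) : G.IsAcyclic := by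
  intro v c hc
  exact hH (c.transfer H (fun e he => edgeSet_subset_edgeSet.mpr h (c.edges_subset_edgeSet he)))
    (hc.transfer _)

lemma edgeSet_fromEdgeSet_of_nondiag {E : Set (Sym2 V)} (h : ∀ e ∈ E, ¬ e.IsDiag) :
    (fromEdgeSet E).edgeSet = E := by
  rw [edgeSet_fromEdgeSet]
  ext e; simp only [Set.mem_diff, Set.mem_setOf_eq]
  exact ⟨fun ⟨h1,_⟩ => h1, fun h1 => ⟨h1, h _ h1⟩⟩

lemma nc_bridge_lower (G : SimpleGraph V) {a b : V} (hadj : G.Adj a b)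
    (hsep : ¬ (fromEdgeSet (G.edgeSet \ {s(a,b)})).Reachable a b) :
    Nat.card G.ConnectedComponent + 1 ≤
      Nat.card (fromEdgeSet (G.edgeSet \ {s(a,b)})).ConnectedComponent := by
  set S := fromEdgeSet (G.edgeSet \ {s(a,b)}) with hS
  have hle : S ≤ G := le_trans (fromEdgeSet_mono Set.diff_subset)
    (le_of_eq (fromEdgeSet_edgeSet G))
  set m := ConnectedComponent.map (Hom.ofLE hle) with hm
  have hsurj : Function.Surjective m := map_spanning_surjective hle
  have hninj : ¬ Function.Injective m := by
    intro hinj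
    have h1 : m (S.connectedComponentMk a) = m (S.connectedComponentMk b) := by
      show G.connectedComponentMk a = G.connectedComponentMk b
      exact ConnectedComponent.eq.mpr hadj.reachable
    exact hsep (ConnectedComponent.eq.mp (hinj h1))
  haveI := Fintype.ofFinite S.ConnectedComponent
  haveI := Fintype.ofFinite G.ConnectedComponent
  have := Fintype.card_lt_of_surjective_not_injective m hsurj hninj
  rw [Nat.card_eq_fintype_card, Nat.card_eq_fintype_card]
  omega

lemma forest_count (G : SimpleGraph V) (hG : G.IsAcyclic) :
    Nat.card G.ConnectedComponent + G.edgeSet.ncard = Fintype.card V := by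
  classical
  generalize hn : G.edgeSet.ncard = n
  induction n using Nat.strong_induction_on generalizing G with
  | _ n ih =>
    rcases Nat.eq_zero_or_pos n with rfl | hpos
    · have hE : G.edgeSet = ∅ := by rwa [Set.ncard_eq_zero (Set.toFinite _)] at hn
      rw [edgeSet_eq_empty.mp hE, nc_bot_card]
      omega
    · obtain ⟨g, hg⟩ : G.edgeSet.Nonempty := by
        rw [Set.nonempty_iff_ne_empty]
        intro h
        rw [h, Set.ncard_empty] at hn
        omega
      induction g using Sym2.ind with | _ a b =>
      have hadj : G.Adj a b := hg
      have hbr := (isAcyclic_iff_forall_edge_isBridge.mp hG) hg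
      rw [isBridge_iff] at hbr
      have hsep : ¬ (fromEdgeSet (G.edgeSet \ {s(a,b)})).Reachable a b := by
        rw [← sdiff_fromEdgeSet_eq]; exact hbr
      set S := fromEdgeSet (G.edgeSet \ {s(a,b)}) with hS
      have hle : S ≤ G := le_trans (fromEdgeSet_mono Set.diff_subset)
        (le_of_eq (fromEdgeSet_edgeSet G))
      have hSedge : S.edgeSet = G.edgeSet \ {s(a,b)} :=
        edgeSet_fromEdgeSet_of_nondiag (fun f hf => G.not_isDiag_of_mem_edgeSet hf.1)
      have hcard : S.edgeSet.ncard = n - 1 := by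
        rw [hSedge, Set.ncard_diff_singleton_of_mem hg, hn]
      have hrec := ih (n-1) (by omega) S (isAcyclic_mono' hle hG) hcard
      have h1 : Nat.card S.ConnectedComponent ≤ Nat.card G.ConnectedComponent + 1 := by
        have := nc_remove_le G.edgeSet s(a,b)
        rwa [fromEdgeSet_edgeSet] at this
      have h2 := nc_bridge_lower G hadj hsep
      rw [← hS] at h2
      omega

lemma connected_card_le (G : SimpleGraph V) (hG : G.Connected) :
    Fintype.card V ≤ G.edgeSet.ncard + 1 := by
  classical
  have h1 := card_le_nc_add G.edgeSet.toFinset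
  rw [Set.coe_toFinset, fromEdgeSet_edgeSet] at h1
  have h2 : Nat.card G.ConnectedComponent = 1 := by
    rw [Nat.card_eq_one_iff_unique]
    constructor
    · constructor
      intro C D
      refine C.ind (fun x => D.ind (fun y => ?_))
      exact ConnectedComponent.eq.mpr (hG.preconnected x y)
    · obtain ⟨v⟩ := hG.nonempty
      exact ⟨G.connectedComponentMk v⟩
  rw [h2] at h1
  rw [Set.ncard_eq_toFinset_card']
  omega

lemma connected_of_acyclic_card (G : SimpleGraph V) (hG : G.IsAcyclic)
    (hcard : G.edgeSet.ncard + 1 = Fintype.card V) : G.Connected := by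
  have h := forest_count G hG
  have hnc : Nat.card G.ConnectedComponent = 1 := by omega
  rw [Nat.card_eq_one_iff_unique] at hnc
  obtain ⟨hss, ⟨C⟩⟩ := hnc
  have hne : Nonempty V := C.ind (fun v => ⟨v⟩)
  haveI := hne
  refine Connected.mk ?_
  intro x y
  have : G.connectedComponentMk x = G.connectedComponentMk y := Subsingleton.elim _ _
  exact ConnectedComponent.eq.mp this

lemma acyclic_of_connected_card (G : SimpleGraph V) (hG : G.Connected)
    (hcard : G.edgeSet.ncard + 1 = Fintype.card V) : G.IsAcyclic := by
  by_contra h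
  rw [isAcyclic_iff_forall_edge_isBridge] at h
  push_neg at h
  obtain ⟨g, hg, hnb⟩ := h
  induction g using Sym2.ind with | _ a b =>
  have hadj : G.Adj a b := hg
  rw [isBridge_iff] at hnb
  push_neg at hnb
  have hreach : (G \ fromEdgeSet {s(a,b)}).Reachable a b := hnb
  rw [sdiff_fromEdgeSet_eq] at hreach
  set S := fromEdgeSet (G.edgeSet \ {s(a,b)}) with hSdef
  have hconn : S.Connected := by
    haveI := hG.nonempty
    refine Connected.mk ?_
    intro x y
    refine reach_of_adj_reach (G := G) ?_ (hG.preconnected x y)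
    intro p q hpq
    by_cases hpq' : s(p,q) = s(a,b)
    · rw [Sym2.eq_iff] at hpq'
      rcases hpq' with ⟨rfl, rfl⟩ | ⟨rfl, rfl⟩
      · exact hreach
      · exact hreach.symm
    · exact ((fromEdgeSet_adj _).mpr ⟨(Set.mem_diff _).mpr ⟨(G.mem_edgeSet).mpr hpq, hpq'⟩, hpq.ne⟩).reachable
  have h5 := connected_card_le S hconn
  have hSedge : S.edgeSet = G.edgeSet \ {s(a,b)} :=
    edgeSet_fromEdgeSet_of_nondiag (fun f hf => G.not_isDiag_of_mem_edgeSet hf.1)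
  have h6 : (G.edgeSet \ {s(a,b)}).ncard = G.edgeSet.ncard - 1 :=
    Set.ncard_diff_singleton_of_mem hg
  have hpos : 1 ≤ G.edgeSet.ncard := by
    have : G.edgeSet.Nonempty := ⟨_, hg⟩
    have := (Set.ncard_pos (Set.toFinite _)).mpr this
    omega
  rw [hSedge, h6] at h5
  omega

lemma tree_ncard {T : SimpleGraph V} (hT : T.IsTree) :
    T.edgeSet.ncard + 1 = Fintype.card V := by
  classical
  have := hT.card_edgeFinset
  rwa [Set.ncard_eq_toFinset_card']

lemma master {T : SimpleGraph V} (hT : T.IsTree) {e : Sym2 V} (he : e ∈ T.edgeSet)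
    {u v : V} (huv : u ≠ v) :
    (fromEdgeSet ((T.edgeSet \ {e}) ∪ {s(u,v)})).IsTree ↔
      ¬ (fromEdgeSet (T.edgeSet \ {e})).Reachable u v := by
  classical
  set D := fromEdgeSet (T.edgeSet \ {e}) with hD
  set T' := fromEdgeSet ((T.edgeSet \ {e}) ∪ {s(u,v)}) with hT'
  have hTcard := tree_ncard hT
  have hT'edge : T'.edgeSet = (T.edgeSet \ {e}) ∪ {s(u,v)} := by
    refine edgeSet_fromEdgeSet_of_nondiag ?_
    rintro f (hf | hf)
    · exact T.not_isDiag_of_mem_edgeSet hf.1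
    · rw [Set.mem_singleton_iff] at hf
      subst hf
      simpa using huv
  have hDedge : D.edgeSet = T.edgeSet \ {e} :=
    edgeSet_fromEdgeSet_of_nondiag (fun f hf => T.not_isDiag_of_mem_edgeSet hf.1)
  have hdiffcard : (T.edgeSet \ {e}).ncard = T.edgeSet.ncard - 1 :=
    Set.ncard_diff_singleton_of_mem he
  constructor
  · intro htree
    have hfnot : s(u,v) ∉ T.edgeSet \ {e} := by
      intro hmem
      have hcollapse : T'.edgeSet = T.edgeSet \ {e} := by
        rw [hT'edge, Set.union_eq_self_of_subset_right (by simpa using hmem)]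
      have := tree_ncard htree
      rw [hcollapse, hdiffcard] at this
      have hpos : 1 ≤ T.edgeSet.ncard := by
        have := (Set.ncard_pos (Set.toFinite _)).mpr ⟨_, he⟩
        omega
      omega
    have hacyclic := htree.IsAcyclic
    have hbr := (isAcyclic_iff_forall_edge_isBridge.mp hacyclic)
      (show s(u,v) ∈ T'.edgeSet by rw [hT'edge]; exact Or.inr rfl)
    rw [isBridge_iff] at hbr
    have h2 : ¬ (T' \ fromEdgeSet {s(u,v)}).Reachable u v := hbr
    rw [sdiff_fromEdgeSet_eq] at h2
    have heq : T'.edgeSet \ {s(u,v)} = T.edgeSet \ {e} := by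
      rw [hT'edge, Set.union_diff_right, Set.diff_singleton_eq_self hfnot]
    rw [heq] at h2
    exact h2
  · intro hsep
    have hfnot : s(u,v) ∉ T.edgeSet \ {e} := by
      intro hmem
      exact hsep ((fromEdgeSet_adj _).mpr ⟨hmem, huv⟩).reachable
    have hcount : T'.edgeSet.ncard + 1 = Fintype.card V := by
      rw [hT'edge, Set.union_singleton, Set.ncard_insert_of_notMem hfnot (Set.toFinite _),
        hdiffcard]
      have hpos : 1 ≤ T.edgeSet.ncard := by
        have := (Set.ncard_pos (Set.toFinite _)).mpr ⟨_, he⟩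
        omega
      omega
    have hbridge : T'.IsBridge s(u,v) := by
      rw [isBridge_iff]
      show ¬ (T' \ fromEdgeSet {s(u,v)}).Reachable u v
      · rw [sdiff_fromEdgeSet_eq]
        have heq : T'.edgeSet \ {s(u,v)} = T.edgeSet \ {e} := by
          rw [hT'edge, Set.union_diff_right, Set.diff_singleton_eq_self hfnot]
        rw [heq]
        exact hsep
    have hacyclic : T'.IsAcyclic := by
      intro w c hc
      by_cases hf : s(u,v) ∈ c.edges
      · exact hbridge.notMem_edges_of_isCycle hc hf
      · have hedges : ∀ f ∈ c.edges, f ∈ T.edgeSet := by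
          intro f hfc
          have := c.edges_subset_edgeSet hfc
          rw [hT'edge] at this
          rcases this with h | h
          · exact h.1
          · rw [Set.mem_singleton_iff] at h
            exact absurd (h ▸ hfc) hf
        exact hT.IsAcyclic (c.transfer T hedges) (hc.transfer _)
    exact ⟨connected_of_acyclic_card T' hacyclic hcount, hacyclic⟩




lemma nc_connected {G : SimpleGraph V} (hG : G.Connected) :
    Nat.card G.ConnectedComponent = 1 := by
  rw [Nat.card_eq_one_iff_unique]
  constructor
  · constructor
    intro C D
    refine C.ind (fun x => D.ind (fun y => ?_))
    exact ConnectedComponent.eq.mpr (hG.preconnected x y)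
  · obtain ⟨v⟩ := hG.nonempty
    exact ⟨G.connectedComponentMk v⟩

lemma nc_remove_finset (E : Set (Sym2 V)) (F : Finset (Sym2 V)) :
    Nat.card (fromEdgeSet (E \ ↑F)).ConnectedComponent ≤
      Nat.card (fromEdgeSet E).ConnectedComponent + F.card := by
  classical
  induction F using Finset.induction with
  | empty => simp
  | @insert g F hg ih =>
    have hdiff : E \ ↑(insert g F) = (E \ ↑F) \ {g} := by
      ext x
      simp only [Finset.coe_insert, Set.mem_diff, Set.mem_insert_iff, Finset.mem_coe,
        Set.mem_singleton_iff]
      tauto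
    rw [hdiff, Finset.card_insert_of_notMem hg]
    calc Nat.card (fromEdgeSet ((E \ ↑F) \ {g})).ConnectedComponent
        ≤ Nat.card (fromEdgeSet (E \ ↑F)).ConnectedComponent + 1 := nc_remove_le _ _
      _ ≤ (Nat.card (fromEdgeSet E).ConnectedComponent + F.card) + 1 := by omega
      _ = _ := by omega

end Core

lemma reach_map {V W : Type*} {G : SimpleGraph V} {G' : SimpleGraph W} (f : V → W)
    (h : ∀ a b, G.Adj a b → G'.Reachable (f a) (f b)) {x y : V} (hxy : G.Reachable x y) :
    G'.Reachable (f x) (f y) := by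
  obtain ⟨w⟩ := hxy
  induction w with
  | nil => exact Reachable.refl _
  | cons ha p ih => exact (h _ _ ha).trans ih

section Upstairs
variable {V : Type*} (s : Set V)

def Eup (E : Set (Sym2 V)) : Set (Sym2 ↥s) := {f | Sym2.map Subtype.val f ∈ E}

lemma induce_fromEdgeSet_eq (E : Set (Sym2 V)) :
    (fromEdgeSet E).induce s = fromEdgeSet (Eup s E) := by
  ext a b
  show (fromEdgeSet E).Adj ↑a ↑b ↔ _
  rw [fromEdgeSet_adj, fromEdgeSet_adj]
  constructor
  · rintro ⟨h1, h2⟩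
    refine ⟨?_, fun hc => h2 (by rw [hc])⟩
    show Sym2.map Subtype.val s(a,b) ∈ E
    rwa [Sym2.map_pair_eq]
  · rintro ⟨h1, h2⟩
    have h3 : Sym2.map Subtype.val s(a,b) ∈ E := h1
    rw [Sym2.map_pair_eq] at h3
    exact ⟨h3, fun hc => h2 (Subtype.ext hc)⟩

lemma Eup_union (E1 E2 : Set (Sym2 V)) : Eup s (E1 ∪ E2) = Eup s E1 ∪ Eup s E2 := rfl

lemma Eup_diff (E1 E2 : Set (Sym2 V)) : Eup s (E1 \ E2) = Eup s E1 \ Eup s E2 := rfl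

lemma Eup_singleton {u v : V} (hu : u ∈ s) (hv : v ∈ s) :
    Eup s {s(u,v)} = {s((⟨u,hu⟩ : ↥s), (⟨v,hv⟩ : ↥s))} := by
  ext f
  induction f using Sym2.ind with | _ p q =>
  show Sym2.map Subtype.val s(p,q) ∈ ({s(u,v)} : Set (Sym2 V)) ↔ _
  rw [Sym2.map_pair_eq]
  simp only [Set.mem_singleton_iff, Sym2.eq_iff]
  constructor
  · rintro (⟨h1, h2⟩ | ⟨h1, h2⟩)
    · exact Or.inl ⟨Subtype.ext h1, Subtype.ext h2⟩
    · exact Or.inr ⟨Subtype.ext h1, Subtype.ext h2⟩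
  · rintro (⟨rfl, rfl⟩ | ⟨rfl, rfl⟩)
    · exact Or.inl ⟨rfl, rfl⟩
    · exact Or.inr ⟨rfl, rfl⟩

lemma reach_down {E : Set (Sym2 V)} {a b : ↥s}
    (h : (fromEdgeSet (Eup s E)).Reachable a b) : (fromEdgeSet E).Reachable ↑a ↑b := by
  refine reach_map Subtype.val ?_ h
  intro x y hxy
  rw [fromEdgeSet_adj] at hxy
  refine ((fromEdgeSet_adj _).mpr ⟨?_, ?_⟩).reachable
  · have h1 : Sym2.map Subtype.val s(x,y) ∈ E := hxy.1
    rwa [Sym2.map_pair_eq] at h1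
  · exact fun hc => hxy.2 (Subtype.ext hc)

lemma walk_up {E : Set (Sym2 V)} (hE : ∀ e ∈ E, ∀ x ∈ e, x ∈ s) :
    ∀ {a b : V} (_ : (fromEdgeSet E).Walk a b) (ha : a ∈ s) (hb : b ∈ s),
      (fromEdgeSet (Eup s E)).Reachable ⟨a, ha⟩ ⟨b, hb⟩ := by
  intro a b w
  induction w with
  | nil => intro ha hb; exact Reachable.refl _
  | @cons x y z hadj p ih =>
    intro ha hb
    rw [fromEdgeSet_adj] at hadj
    have hy : y ∈ s := hE _ hadj.1 y (Sym2.mem_mk_right x y)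
    refine Reachable.trans (Adj.reachable ?_) (ih hy hb)
    rw [fromEdgeSet_adj]
    refine ⟨?_, fun hc => hadj.2 (congrArg Subtype.val hc)⟩
    show Sym2.map Subtype.val s((⟨x,ha⟩ : ↥s),(⟨y,hy⟩ : ↥s)) ∈ E
    rw [Sym2.map_pair_eq]
    exact hadj.1

lemma reach_up {E : Set (Sym2 V)} (hE : ∀ e ∈ E, ∀ x ∈ e, x ∈ s) {a b : V}
    (ha : a ∈ s) (hb : b ∈ s) (h : (fromEdgeSet E).Reachable a b) :
    (fromEdgeSet (Eup s E)).Reachable ⟨a, ha⟩ ⟨b, hb⟩ := by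
  obtain ⟨w⟩ := h
  exact walk_up s hE w ha hb

end Upstairs

section CubeLemmas
variable {n : ℕ}

lemma edgeInDir_pair_iff {i : Fin n} {X Y : Finset (Fin n)} :
    edgeInDir i s(X,Y) ↔ symmDiff X Y = {i} := by
  constructor
  · rintro ⟨Z, hZ⟩
    rw [Sym2.eq_iff] at hZ
    rcases hZ with ⟨rfl, rfl⟩ | ⟨rfl, rfl⟩
    · rw [symmDiff_symmDiff_cancel_left]
    · rw [symmDiff_comm, symmDiff_symmDiff_cancel_left]
  · intro h
    refine ⟨X, ?_⟩
    rw [← h, symmDiff_symmDiff_cancel_left]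

lemma dir_unique_s13 {i i' : Fin n} {g : Sym2 (Finset (Fin n))}
    (h : edgeInDir i g) (h' : edgeInDir i' g) : i = i' := by
  induction g using Sym2.ind with | _ X Y =>
  rw [edgeInDir_pair_iff] at h h'
  exact Finset.singleton_injective (h.symm.trans h')

lemma symmDiff_symmDiff_same (X Y A : Finset (Fin n)) :
    symmDiff (symmDiff X A) (symmDiff Y A) = symmDiff X Y := by
  rw [symmDiff_comm Y A, symmDiff_assoc, ← symmDiff_assoc A, symmDiff_self, bot_symmDiff]

lemma inter_symmDiff_of_mem {R : Finset (Fin n)} {i : Fin n} (hi : i ∈ R) (X : Finset (Fin n)) :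
    (symmDiff X {i}) ∩ R = symmDiff (X ∩ R) {i} := by
  have h := inf_symmDiff_distrib_right X {i} R
  simp only [Finset.inf_eq_inter] at h
  rw [h, Finset.singleton_inter_of_mem hi]

lemma inter_symmDiff_of_not_mem {R : Finset (Fin n)} {i : Fin n} (hi : i ∉ R)
    (X : Finset (Fin n)) : (symmDiff X {i}) ∩ R = X ∩ R := by
  have h := inf_symmDiff_distrib_right X {i} R
  simp only [Finset.inf_eq_inter] at h
  rw [h, Finset.singleton_inter_of_notMem hi, ← Finset.bot_eq_empty, symmDiff_bot]

lemma ne_of_symmDiff_eq_singleton {X Y : Finset (Fin n)} {j : Fin n}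
    (h : symmDiff X Y = {j}) : X ≠ Y := by
  intro hc
  rw [hc, symmDiff_self, Finset.bot_eq_empty] at h
  exact (Finset.singleton_ne_empty j) h.symm

lemma ne_symmDiff_singleton (A : Finset (Fin n)) (j : Fin n) : A ≠ symmDiff A {j} :=
  ne_of_symmDiff_eq_singleton (by rw [symmDiff_symmDiff_cancel_left])

lemma cube_edge_of_symmDiff {X Y : Finset (Fin n)} {j : Fin n} (h : symmDiff X Y = {j}) :
    s(X,Y) ∈ (cube n).edgeSet := by
  rw [mem_edgeSet]
  show (symmDiff X Y).card = 1
  rw [h, Finset.card_singleton]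

/-- Edges of the cube have the form `s(X, X ∆ {d})`. -/
lemma cube_adj_form {X Y : Finset (Fin n)} (h : (cube n).Adj X Y) :
    ∃ d : Fin n, symmDiff X Y = {d} ∧ Y = symmDiff X {d} := by
  obtain ⟨d, hd⟩ := Finset.card_eq_one.mp h
  exact ⟨d, hd, by rw [← hd, symmDiff_symmDiff_cancel_left]⟩

end CubeLemmas

section MainLemmas
variable {n : ℕ} (R : Finset (Fin n)) (T : SimpleGraph (Finset (Fin n)))

/-- The set of edges of `T` in directions belonging to `R`. -/
def ERs : Set (Sym2 (Finset (Fin n))) := {g | g ∈ T.edgeSet ∧ ∃ i ∈ R, edgeInDir i g}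

lemma mem_ERs {g : Sym2 (Finset (Fin n))} :
    g ∈ ERs R T ↔ g ∈ T.edgeSet ∧ ∃ i ∈ R, edgeInDir i g := Iff.rfl

lemma ER_ncard_sum (F : Finset (Fin n)) :
    {g | g ∈ T.edgeSet ∧ ∃ i ∈ F, edgeInDir i g}.ncard = ∑ i ∈ F, dirCount T i := by
  classical
  induction F using Finset.induction with
  | empty => simp
  | @insert a F ha ih =>
    rw [Finset.sum_insert ha, ← ih]
    have hsplit : {g | g ∈ T.edgeSet ∧ ∃ i ∈ insert a F, edgeInDir i g} =
        {g | g ∈ T.edgeSet ∧ edgeInDir a g} ∪ {g | g ∈ T.edgeSet ∧ ∃ i ∈ F, edgeInDir i g} := by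
      ext g
      simp only [Set.mem_setOf_eq, Set.mem_union, Finset.mem_insert]
      constructor
      · rintro ⟨hg, i, (rfl | hi), hdir⟩
        · exact Or.inl ⟨hg, hdir⟩
        · exact Or.inr ⟨hg, i, hi, hdir⟩
      · rintro (⟨hg, hdir⟩ | ⟨hg, i, hi, hdir⟩)
        · exact ⟨hg, a, Or.inl rfl, hdir⟩
        · exact ⟨hg, i, Or.inr hi, hdir⟩
    have hdisj : Disjoint {g | g ∈ T.edgeSet ∧ edgeInDir a g}
        {g | g ∈ T.edgeSet ∧ ∃ i ∈ F, edgeInDir i g} := by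
      rw [Set.disjoint_left]
      rintro g ⟨hg, hdir⟩ ⟨hg', i, hi, hdir'⟩
      exact ha (dir_unique_s13 hdir hdir' ▸ hi)
    rw [hsplit, Set.ncard_union_eq hdisj (Set.toFinite _) (Set.toFinite _)]
    rfl

lemma ERs_ncard (hred : ReducesOver (fun i => dirCount T i) R) :
    (ERs R T).ncard = 2 ^ R.card - 1 := by
  have h := ER_ncard_sum T R
  rw [ERs, h]
  exact hred

lemma H_adj_inter (hT : T ≤ cube n) {a b : Finset (Fin n)}
    (hadj : (fromEdgeSet (T.edgeSet \ ERs R T)).Adj a b) : a ∩ R = b ∩ R := by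
  rw [fromEdgeSet_adj] at hadj
  obtain ⟨⟨hmem, hnot⟩, hne⟩ := hadj
  have hcube : (cube n).Adj a b := by
    have := edgeSet_subset_edgeSet.mpr hT hmem
    rwa [mem_edgeSet] at this
  obtain ⟨d, hd, hb⟩ := cube_adj_form hcube
  have hdR : d ∉ R := fun hdR => hnot ⟨hmem, d, hdR, edgeInDir_pair_iff.mpr hd⟩
  rw [hb, inter_symmDiff_of_not_mem hdR]

lemma fiber_reach (hT : IsSpanningTreeOf T (cube n))
    (hcard : (ERs R T).ncard = 2 ^ R.card - 1) :
    ∀ W W', W ∩ R = W' ∩ R → (fromEdgeSet (T.edgeSet \ ERs R T)).Reachable W W' := by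
  classical
  set H := fromEdgeSet (T.edgeSet \ ERs R T) with hH
  have hfin : (ERs R T).Finite := Set.toFinite _
  have hnc : Nat.card H.ConnectedComponent ≤ 2 ^ R.card := by
    have h1 := nc_remove_finset T.edgeSet hfin.toFinset
    rw [Set.Finite.coe_toFinset, fromEdgeSet_edgeSet] at h1
    have h2 : Nat.card T.ConnectedComponent = 1 := nc_connected hT.2.isConnected
    have h3 : hfin.toFinset.card = 2 ^ R.card - 1 := by
      rw [← Set.ncard_eq_toFinset_card _ hfin, hcard]
    rw [← hH] at h1
    have hpow : 1 ≤ 2 ^ R.card := Nat.one_le_two_pow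
    omega
  have hadjinv : ∀ (v w : Finset (Fin n)) (p : H.Walk v w), p.IsPath → v ∩ R = w ∩ R := by
    intro v w p hp
    clear hp
    induction p with
    | nil => rfl
    | cons ha p ih => rw [H_adj_inter R T hT.1 ha]; exact ih
  set φ : H.ConnectedComponent → Finset (Fin n) :=
    ConnectedComponent.lift (· ∩ R) hadjinv with hφ
  have hφmk : ∀ W, φ (H.connectedComponentMk W) = W ∩ R := fun W => rfl
  have hmem : ∀ C, φ C ∈ R.powerset := by
    refine ConnectedComponent.ind ?_
    intro W
    rw [hφmk, Finset.mem_powerset]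
    exact Finset.inter_subset_right
  set ψ : H.ConnectedComponent → {A // A ∈ R.powerset} := fun C => ⟨φ C, hmem C⟩ with hψ
  have hsurj : Function.Surjective ψ := by
    rintro ⟨A, hA⟩
    refine ⟨H.connectedComponentMk A, Subtype.ext ?_⟩
    change φ (H.connectedComponentMk A) = A
    rw [hφmk, Finset.inter_eq_left.mpr (Finset.mem_powerset.mp hA)]
  haveI := Fintype.ofFinite H.ConnectedComponent
  have hcard2 : Fintype.card {A // A ∈ R.powerset} = 2 ^ R.card := by
    rw [Fintype.card_coe, Finset.card_powerset]
  have hle2 : Fintype.card {A // A ∈ R.powerset} ≤ Fintype.card H.ConnectedComponent :=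
    Fintype.card_le_of_surjective ψ hsurj
  have hnc' : Fintype.card H.ConnectedComponent ≤ 2 ^ R.card := by
    rwa [← Nat.card_eq_fintype_card]
  have hinj : Function.Injective ψ :=
    ((Fintype.bijective_iff_surjective_and_card ψ).mpr ⟨hsurj, by omega⟩).injective
  intro W W' hWW'
  have heq : ψ (H.connectedComponentMk W) = ψ (H.connectedComponentMk W') := by
    apply Subtype.ext
    change φ (H.connectedComponentMk W) = φ (H.connectedComponentMk W')
    rw [hφmk, hφmk, hWW']
  exact ConnectedComponent.eq.mp (hinj heq)

end MainLemmas


section ProjLemmas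
variable {n : ℕ} (R : Finset (Fin n)) (T : SimpleGraph (Finset (Fin n)))

lemma projEdges_eq_image : projEdges R T = Sym2.map (· ∩ R) '' (ERs R T) := by
  ext f
  simp only [projEdges, Set.mem_setOf_eq, Set.mem_image, mem_ERs]
  constructor
  · rintro ⟨g, hg, hdir, rfl⟩
    exact ⟨g, ⟨hg, hdir⟩, rfl⟩
  · rintro ⟨g, ⟨hg, hdir⟩, rfl⟩
    exact ⟨g, hg, hdir, rfl⟩

lemma ER_pair {g : Sym2 (Finset (Fin n))} (hg : g ∈ ERs R T) :
    ∃ X j, j ∈ R ∧ g = s(X, symmDiff X {j}) := by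
  obtain ⟨-, i, hiR, X, rfl⟩ := hg
  exact ⟨X, i, hiR, rfl⟩

lemma P_edge_form {f : Sym2 (Finset (Fin n))} (hf : f ∈ projEdges R T) :
    ∃ A j, j ∈ R ∧ A ⊆ R ∧ f = s(A, symmDiff A {j}) := by
  rw [projEdges_eq_image] at hf
  obtain ⟨g, hg, rfl⟩ := hf
  obtain ⟨X, j, hjR, rfl⟩ := ER_pair R T hg
  refine ⟨X ∩ R, j, hjR, Finset.inter_subset_right, ?_⟩
  rw [Sym2.map_pair_eq]
  rw [show symmDiff X {j} ∩ R = symmDiff (X ∩ R) {j} from inter_symmDiff_of_mem hjR X]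

lemma P_subset_cube {f : Sym2 (Finset (Fin n))} (hf : f ∈ projEdges R T) :
    f ∈ (cube n).edgeSet := by
  obtain ⟨A, j, hjR, hAR, rfl⟩ := P_edge_form R T hf
  exact cube_edge_of_symmDiff (by rw [symmDiff_symmDiff_cancel_left])

lemma P_endpoints {f : Sym2 (Finset (Fin n))} (hf : f ∈ projEdges R T) :
    ∀ x ∈ f, x ∈ {W : Finset (Fin n) | W ⊆ R} := by
  obtain ⟨A, j, hjR, hAR, rfl⟩ := P_edge_form R T hf
  intro x hx
  rw [Sym2.mem_iff] at hx
  rcases hx with rfl | rfl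
  · exact hAR
  · show symmDiff A {j} ⊆ R
    have h1 : symmDiff A {j} ≤ A ⊔ {j} := symmDiff_le_sup
    rw [Finset.sup_eq_union] at h1
    exact subset_trans h1 (Finset.union_subset hAR (Finset.singleton_subset_iff.mpr hjR))

lemma P_nondiag {f : Sym2 (Finset (Fin n))} (hf : f ∈ projEdges R T) : ¬ f.IsDiag := by
  obtain ⟨A, j, hjR, hAR, rfl⟩ := P_edge_form R T hf
  rw [Sym2.isDiag_iff_proj_eq]
  exact ne_symmDiff_singleton A j

lemma proj_reach (hT : T ≤ cube n) {W W' : Finset (Fin n)} (h : T.Reachable W W') :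
    (fromEdgeSet (projEdges R T)).Reachable (W ∩ R) (W' ∩ R) := by
  refine reach_map (· ∩ R) ?_ h
  intro a b hadj
  obtain ⟨d, hd, hb⟩ := cube_adj_form (hT hadj)
  by_cases hdR : d ∈ R
  · refine Adj.reachable ?_
    rw [fromEdgeSet_adj]
    constructor
    · rw [projEdges_eq_image]
      exact ⟨s(a,b), ⟨(T.mem_edgeSet).mpr hadj, d, hdR, edgeInDir_pair_iff.mpr hd⟩,
        Sym2.map_pair_eq _ _ _⟩
    · show a ∩ R ≠ b ∩ R
      rw [hb, inter_symmDiff_of_mem hdR]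
      exact ne_symmDiff_singleton _ d
  · show (fromEdgeSet (projEdges R T)).Reachable (a ∩ R) (b ∩ R)
    rw [hb, inter_symmDiff_of_not_mem hdR]

lemma card_s_vertices : Fintype.card ↥{W : Finset (Fin n) | W ⊆ R} = 2 ^ R.card := by
  have hseq : {W : Finset (Fin n) | W ⊆ R} = ↑R.powerset := by
    ext W; simp [Finset.mem_powerset]
  rw [← Nat.card_eq_fintype_card, Nat.card_coe_set_eq, hseq, Set.ncard_coe_finset,
    Finset.card_powerset]

lemma proj_tree (hT : IsSpanningTreeOf T (cube n))
    (hcardER : (ERs R T).ncard = 2 ^ R.card - 1) :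
    (fromEdgeSet (Eup {W : Finset (Fin n) | W ⊆ R} (projEdges R T))).IsTree ∧
      (projEdges R T).ncard = 2 ^ R.card - 1 := by
  classical
  set s : Set (Finset (Fin n)) := {W : Finset (Fin n) | W ⊆ R} with hs
  set P : Set (Sym2 (Finset (Fin n))) := projEdges R T with hP
  set Gi := fromEdgeSet (Eup s P) with hGi
  have hconn : Gi.Connected := by
    haveI : Nonempty ↥s := ⟨⟨∅, by simp [hs]⟩⟩
    refine Connected.mk ?_
    rintro ⟨A, hA⟩ ⟨B, hB⟩
    have hr := proj_reach R T hT.1 (hT.2.isConnected.preconnected A B)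
    rw [Finset.inter_eq_left.mpr hA, Finset.inter_eq_left.mpr hB] at hr
    exact reach_up s (fun f hf => P_endpoints R T hf) hA hB hr
  have hGiedge : Gi.edgeSet = Eup s P := by
    refine edgeSet_fromEdgeSet_of_nondiag ?_
    intro f hf
    induction f using Sym2.ind with | _ p q =>
    intro hdiag
    rw [Sym2.isDiag_iff_proj_eq] at hdiag
    have h1 : Sym2.map Subtype.val s(p,q) ∈ P := hf
    rw [Sym2.map_pair_eq] at h1
    exact P_nondiag R T h1 (by rw [Sym2.isDiag_iff_proj_eq]; exact congrArg Subtype.val hdiag)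
  have himg : Sym2.map (Subtype.val : ↥s → Finset (Fin n)) '' (Eup s P) = P := by
    ext f
    constructor
    · rintro ⟨f', hf', rfl⟩
      exact hf'
    · intro hf
      induction f using Sym2.ind with | _ A B =>
      have hA : A ∈ s := P_endpoints R T hf A (Sym2.mem_mk_left A B)
      have hB : B ∈ s := P_endpoints R T hf B (Sym2.mem_mk_right A B)
      refine ⟨s((⟨A, hA⟩ : ↥s), (⟨B, hB⟩ : ↥s)), ?_, Sym2.map_pair_eq _ _ _⟩
      show Sym2.map Subtype.val s((⟨A, hA⟩ : ↥s), (⟨B, hB⟩ : ↥s)) ∈ P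
      rw [Sym2.map_pair_eq]
      exact hf
  have hEupcard : (Eup s P).ncard = P.ncard := by
    conv_rhs => rw [← himg]
    rw [Set.ncard_image_of_injective _ (Sym2.map.injective Subtype.val_injective)]
  have hPle : P.ncard ≤ 2 ^ R.card - 1 := by
    rw [hP, projEdges_eq_image, ← hcardER]
    exact Set.ncard_image_le (Set.toFinite _)
  have hV := card_s_vertices R
  have hcle := connected_card_le Gi hconn
  rw [hGiedge, hEupcard, hV] at hcle
  have hpow : 1 ≤ 2 ^ R.card := Nat.one_le_two_pow
  have hPcard : P.ncard = 2 ^ R.card - 1 := by omega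
  have hacyc : Gi.IsAcyclic := by
    refine acyclic_of_connected_card Gi hconn ?_
    rw [hGiedge, hEupcard, hV, hPcard]
    omega
  exact ⟨⟨hconn, hacyc⟩, hPcard⟩

lemma proj_injOn (hT : IsSpanningTreeOf T (cube n))
    (hcardER : (ERs R T).ncard = 2 ^ R.card - 1) :
    Set.InjOn (Sym2.map (· ∩ R)) (ERs R T) := by
  refine Set.injOn_of_ncard_image_eq ?_ (Set.toFinite _)
  rw [← projEdges_eq_image, (proj_tree R T hT hcardER).2, hcardER]

end ProjLemmas


section Corr
variable {n : ℕ} (R : Finset (Fin n)) (T : SimpleGraph (Finset (Fin n)))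

lemma symmDiff_subset_R {A : Finset (Fin n)} {j : Fin n} (hA : A ⊆ R) (hj : j ∈ R) :
    symmDiff A {j} ⊆ R := by
  have h1 : symmDiff A {j} ≤ A ⊔ {j} := symmDiff_le_sup
  rw [Finset.sup_eq_union] at h1
  exact subset_trans h1 (Finset.union_subset hA (Finset.singleton_subset_iff.mpr hj))

lemma down_reach (hT : T ≤ cube n) (hinj : Set.InjOn (Sym2.map (· ∩ R)) (ERs R T))
    {e : Sym2 (Finset (Fin n))} (heER : e ∈ ERs R T) {x y : Finset (Fin n)}
    (h : (fromEdgeSet (T.edgeSet \ {e})).Reachable x y) :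
    (fromEdgeSet (projEdges R T \ {Sym2.map (· ∩ R) e})).Reachable (x ∩ R) (y ∩ R) := by
  refine reach_map (· ∩ R) ?_ h
  intro a b hadj
  rw [fromEdgeSet_adj] at hadj
  obtain ⟨hmem, hne⟩ := hadj
  have hmemT : s(a,b) ∈ T.edgeSet := hmem.1
  have hnee : s(a,b) ≠ e := fun hc => hmem.2 (by rw [hc]; rfl)
  have hcube : (cube n).Adj a b := hT ((T.mem_edgeSet).mp hmemT)
  obtain ⟨d, hd, hb⟩ := cube_adj_form hcube
  by_cases hdR : d ∈ R
  · have hER : s(a,b) ∈ ERs R T := ⟨hmemT, d, hdR, edgeInDir_pair_iff.mpr hd⟩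
    have hmap : Sym2.map (· ∩ R) s(a,b) = s(a ∩ R, b ∩ R) := Sym2.map_pair_eq _ _ _
    refine Adj.reachable ?_
    rw [fromEdgeSet_adj]
    refine ⟨⟨?_, ?_⟩, ?_⟩
    · rw [projEdges_eq_image, ← hmap]
      exact ⟨s(a,b), hER, rfl⟩
    · rw [← hmap]
      intro hc
      exact hnee (hinj hER heER (Set.mem_singleton_iff.mp hc))
    · show a ∩ R ≠ b ∩ R
      rw [hb, inter_symmDiff_of_mem hdR]
      exact ne_symmDiff_singleton _ d
  · show (fromEdgeSet _).Reachable (a ∩ R) (b ∩ R)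
    rw [hb, inter_symmDiff_of_not_mem hdR]

lemma up_reach (hT : IsSpanningTreeOf T (cube n)) (hcardER : (ERs R T).ncard = 2 ^ R.card - 1)
    {e : Sym2 (Finset (Fin n))} (heER : e ∈ ERs R T) {A B : Finset (Fin n)}
    (h : (fromEdgeSet (projEdges R T \ {Sym2.map (· ∩ R) e})).Reachable A B) :
    ∀ W W', W ∩ R = A → W' ∩ R = B → (fromEdgeSet (T.edgeSet \ {e})).Reachable W W' := by
  have hfib : ∀ {W W' : Finset (Fin n)}, W ∩ R = W' ∩ R →
      (fromEdgeSet (T.edgeSet \ {e})).Reachable W W' := by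
    intro W W' hWW'
    refine Reachable.mono (fromEdgeSet_mono ?_) (fiber_reach R T hT hcardER W W' hWW')
    exact Set.diff_subset_diff_right (Set.singleton_subset_iff.mpr heER)
  obtain ⟨w⟩ := h
  induction w with
  | nil =>
    intro W W' h1 h2
    exact hfib (h1.trans h2.symm)
  | @cons A C B hadj p ih =>
    intro W W' h1 h2
    rw [fromEdgeSet_adj] at hadj
    obtain ⟨⟨hmemP, hnepe⟩, hne⟩ := hadj
    rw [projEdges_eq_image] at hmemP
    obtain ⟨g, hgER, hmap⟩ := hmemP
    have hgT : g ∈ T.edgeSet := hgER.1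
    have hge : g ≠ e := by
      rintro rfl
      exact hnepe (by rw [← hmap]; rfl)
    obtain ⟨X, j0, hj0R, rfl⟩ := ER_pair R T hgER
    rw [Sym2.map_pair_eq, Sym2.eq_iff] at hmap
    have hXY : s(X, symmDiff X {j0}) ∈ T.edgeSet \ {e} := ⟨hgT, hge⟩
    rcases hmap with ⟨hXA, hYC⟩ | ⟨hXC, hYA⟩
    · refine (hfib (W := W) (W' := X) (by rw [h1, hXA])).trans ?_
      refine Reachable.trans (Adj.reachable ?_) (ih _ W' hYC h2)
      rw [fromEdgeSet_adj]
      exact ⟨hXY, fun hc => hne (by rw [← hXA, ← hYC]; exact congrArg (· ∩ R) hc)⟩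
    · refine (hfib (W := W) (W' := symmDiff X {j0}) (by rw [h1, hYA])).trans ?_
      refine Reachable.trans (Adj.reachable ?_) (ih _ W' hXC h2)
      rw [fromEdgeSet_adj]
      constructor
      · rw [Sym2.eq_swap]
        exact hXY
      · exact fun hc => hne (by rw [← hYA, ← hXC]; exact congrArg (· ∩ R) hc)

lemma slidable_iff_sep (hT : IsSpanningTreeOf T (cube n)) {U V : Finset (Fin n)} {j : Fin n}
    (hUV : symmDiff U V = {j}) (he : s(U,V) ∈ T.edgeSet) (i : Fin n) :
    Slidable n T i s(U,V) ↔
      ¬ (fromEdgeSet (T.edgeSet \ {s(U,V)})).Reachable (symmDiff U {i}) (symmDiff V {i}) := by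
  have hslide : slideEdge i s(U,V) = s(symmDiff U {i}, symmDiff V {i}) := Sym2.map_pair_eq _ _ _
  have huv : symmDiff (symmDiff U {i}) (symmDiff V {i}) = {j} := by
    rw [symmDiff_symmDiff_same, hUV]
  have hne : symmDiff U {i} ≠ symmDiff V {i} := ne_of_symmDiff_eq_singleton huv
  have hmaster := master (V := Finset (Fin n)) hT.2 he hne
  unfold Slidable IsSpanningTreeOf
  rw [hslide]
  constructor
  · rintro ⟨-, -, htree⟩
    exact hmaster.mp htree
  · intro hsep
    refine ⟨he, ?_, hmaster.mpr hsep⟩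
    have hsub : (T.edgeSet \ {s(U,V)}) ∪ {s(symmDiff U {i}, symmDiff V {i})} ⊆
        (cube n).edgeSet := by
      rintro f (hf | hf)
      · exact edgeSet_subset_edgeSet.mpr hT.1 hf.1
      · rw [Set.mem_singleton_iff] at hf
        rw [hf]
        exact cube_edge_of_symmDiff huv
    calc fromEdgeSet ((T.edgeSet \ {s(U,V)}) ∪ {s(symmDiff U {i}, symmDiff V {i})})
        ≤ fromEdgeSet ((cube n).edgeSet) := fromEdgeSet_mono hsub
      _ = cube n := fromEdgeSet_edgeSet _

lemma slidableOn_iff_sep (hT : IsSpanningTreeOf T (cube n))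
    (hcardER : (ERs R T).ncard = 2 ^ R.card - 1)
    {A B : Finset (Fin n)} {j : Fin n} (hj : j ∈ R)
    (hAB : symmDiff A B = {j}) (hA : A ⊆ R) (hB : B ⊆ R)
    (hP : s(A,B) ∈ projEdges R T) {i : Fin n} (hiR : i ∈ R) :
    SlidableOn n {W : Finset (Fin n) | W ⊆ R} (projEdges R T) i s(A,B) ↔
      ¬ (fromEdgeSet (projEdges R T \ {s(A,B)})).Reachable (symmDiff A {i}) (symmDiff B {i}) := by
  classical
  set sR : Set (Finset (Fin n)) := {W : Finset (Fin n) | W ⊆ R} with hsR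
  set P : Set (Sym2 (Finset (Fin n))) := projEdges R T with hPdef
  obtain ⟨hGitree, hPcard⟩ := proj_tree R T hT hcardER
  have hGiedge : (fromEdgeSet (Eup sR P)).edgeSet = Eup sR P := by
    refine edgeSet_fromEdgeSet_of_nondiag ?_
    intro f hf
    induction f using Sym2.ind with | _ p q =>
    intro hdiag
    rw [Sym2.isDiag_iff_proj_eq] at hdiag
    have h1 : Sym2.map Subtype.val s(p,q) ∈ P := hf
    rw [Sym2.map_pair_eq] at h1
    exact P_nondiag R T h1 (by rw [Sym2.isDiag_iff_proj_eq]; exact congrArg Subtype.val hdiag)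
  have hAs : A ∈ sR := hA
  have hBs : B ∈ sR := hB
  have hu's : symmDiff A {i} ∈ sR := symmDiff_subset_R R hA hiR
  have hv's : symmDiff B {i} ∈ sR := symmDiff_subset_R R hB hiR
  have hABup : s((⟨A, hAs⟩ : ↥sR), (⟨B, hBs⟩ : ↥sR)) ∈ (fromEdgeSet (Eup sR P)).edgeSet := by
    rw [hGiedge]
    show Sym2.map Subtype.val s((⟨A, hAs⟩ : ↥sR), (⟨B, hBs⟩ : ↥sR)) ∈ P
    rw [Sym2.map_pair_eq]
    exact hP
  have huv : symmDiff (symmDiff A {i}) (symmDiff B {i}) = {j} := by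
    rw [symmDiff_symmDiff_same, hAB]
  have hne : symmDiff A {i} ≠ symmDiff B {i} := ne_of_symmDiff_eq_singleton huv
  have hneup : (⟨symmDiff A {i}, hu's⟩ : ↥sR) ≠ ⟨symmDiff B {i}, hv's⟩ :=
    fun hc => hne (congrArg Subtype.val hc)
  have hmaster := master hGitree hABup hneup
  have hEupdiff : (fromEdgeSet (Eup sR P)).edgeSet \ {s((⟨A, hAs⟩ : ↥sR), (⟨B, hBs⟩ : ↥sR))} =
      Eup sR (P \ {s(A,B)}) := by
    rw [hGiedge, Eup_diff, Eup_singleton sR hAs hBs]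
  have hEupall : (fromEdgeSet (Eup sR P)).edgeSet \ {s((⟨A, hAs⟩ : ↥sR), (⟨B, hBs⟩ : ↥sR))} ∪
      {s((⟨symmDiff A {i}, hu's⟩ : ↥sR), (⟨symmDiff B {i}, hv's⟩ : ↥sR))} =
      Eup sR ((P \ {s(A,B)}) ∪ {s(symmDiff A {i}, symmDiff B {i})}) := by
    rw [hEupdiff, Eup_union, Eup_singleton sR hu's hv's]
  rw [hEupall, hEupdiff] at hmaster
  have hsepiff : (¬ (fromEdgeSet (Eup sR (P \ {s(A,B)}))).Reachable
        ⟨symmDiff A {i}, hu's⟩ ⟨symmDiff B {i}, hv's⟩) ↔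
      ¬ (fromEdgeSet (P \ {s(A,B)})).Reachable (symmDiff A {i}) (symmDiff B {i}) := by
    constructor
    · intro h1 h2
      refine h1 ?_
      refine reach_up sR ?_ hu's hv's h2
      exact fun f hf => P_endpoints R T hf.1
    · intro h1 h2
      exact h1 (reach_down sR h2)
  have hslide : slideEdge i s(A,B) = s(symmDiff A {i}, symmDiff B {i}) := Sym2.map_pair_eq _ _ _
  unfold SlidableOn IsSpanningTreeOn
  rw [hslide]
  constructor
  · rintro ⟨-, -, -, htree⟩
    rw [induce_fromEdgeSet_eq] at htree
    exact hsepiff.mp (hmaster.mp htree)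
  · intro hsep
    refine ⟨hP, ?_, ?_, ?_⟩
    · rintro f (hf | hf)
      · exact P_subset_cube R T hf.1
      · rw [Set.mem_singleton_iff] at hf
        rw [hf]
        exact cube_edge_of_symmDiff huv
    · rintro f (hf | hf) v hv
      · exact P_endpoints R T hf.1 v hv
      · rw [Set.mem_singleton_iff] at hf
        subst hf
        rw [Sym2.mem_iff] at hv
        rcases hv with rfl | rfl
        · exact hu's
        · exact hv's
    · rw [induce_fromEdgeSet_eq]
      exact hmaster.mpr (hsepiff.mpr hsep)

end Corr

/-- Theorem: slides of edges in directions in `R`. Let `T` be a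
spanning tree of `Q_n` reducing over the proper nonempty subset `R`, and let `e` be an
edge of `T` in a direction `j ∈ R`. Then (a) `e` is `i`-slidable for every `i ∉ R`, and
(b) for `i ∈ R`, `i ≠ j`, `e` is `i`-slidable in `T` iff `π_R(e)` is `i`-slidable as an
edge of the spanning tree `π_R(T)` of `Q_R`. -/
theorem stmt13 (n : ℕ) (R : Finset (Fin n)) (hR1 : R.Nonempty) (hR2 : R ≠ Finset.univ)
    (T : SimpleGraph (Finset (Fin n))) (hT : IsSpanningTreeOf T (cube n))
    (hred : ReducesOver (fun i => dirCount T i) R)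
    (j : Fin n) (hj : j ∈ R) (e : Sym2 (Finset (Fin n)))
    (he : e ∈ T.edgeSet) (hedir : edgeInDir j e) :
    (∀ i, i ∉ R → Slidable n T i e) ∧
    (∀ i ∈ R, i ≠ j →
      (Slidable n T i e ↔
        SlidableOn n {W : Finset (Fin n) | W ⊆ R} (projEdges R T) i
          (Sym2.map (· ∩ R) e))) := by

  classical
  obtain ⟨X, rfl⟩ := hedir
  set V : Finset (Fin n) := symmDiff X {j} with hVdef
  have hUV : symmDiff X V = {j} := by rw [hVdef, symmDiff_symmDiff_cancel_left]
  have heER : s(X, V) ∈ ERs R T := ⟨he, j, hj, ⟨X, rfl⟩⟩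
  have hcardER : (ERs R T).ncard = 2 ^ R.card - 1 := ERs_ncard R T hred
  constructor
  · -- (a) : i ∉ R
    intro i hiR
    rw [slidable_iff_sep T hT hUV he i]
    intro hreach
    have hmono : (fromEdgeSet (T.edgeSet \ ERs R T)) ≤ fromEdgeSet (T.edgeSet \ {s(X,V)}) :=
      fromEdgeSet_mono (Set.diff_subset_diff_right (Set.singleton_subset_iff.mpr heER))
    have hfibU : (fromEdgeSet (T.edgeSet \ {s(X,V)})).Reachable X (symmDiff X {i}) :=
      Reachable.mono hmono (fiber_reach R T hT hcardER X (symmDiff X {i})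
        (inter_symmDiff_of_not_mem hiR X).symm)
    have hfibV : (fromEdgeSet (T.edgeSet \ {s(X,V)})).Reachable V (symmDiff V {i}) :=
      Reachable.mono hmono (fiber_reach R T hT hcardER V (symmDiff V {i})
        (inter_symmDiff_of_not_mem hiR V).symm)
    have hXV : (fromEdgeSet (T.edgeSet \ {s(X,V)})).Reachable X V :=
      (hfibU.trans hreach).trans hfibV.symm
    have hbr := (isAcyclic_iff_forall_edge_isBridge.mp hT.2.IsAcyclic) he
    rw [isBridge_iff] at hbr
    exact hbr (show (T \ fromEdgeSet {s(X,V)}).Reachable X V by rwa [sdiff_fromEdgeSet_eq])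
  · -- (b) : i ∈ R, i ≠ j
    intro i hiR hij
    have hmape : Sym2.map (· ∩ R) s(X, V) = s(X ∩ R, symmDiff (X ∩ R) {j}) := by
      rw [Sym2.map_pair_eq, hVdef,
        show symmDiff X {j} ∩ R = symmDiff (X ∩ R) {j} from inter_symmDiff_of_mem hj X]
    have hBV : V ∩ R = symmDiff (X ∩ R) {j} := inter_symmDiff_of_mem hj X
    have hAB : symmDiff (X ∩ R) (symmDiff (X ∩ R) {j}) = {j} := by
      rw [symmDiff_symmDiff_cancel_left]
    have hBR : symmDiff (X ∩ R) {j} ⊆ R := symmDiff_subset_R R Finset.inter_subset_right hj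
    have hPmem : s(X ∩ R, symmDiff (X ∩ R) {j}) ∈ projEdges R T := by
      rw [← hmape, projEdges_eq_image]
      exact ⟨_, heER, rfl⟩
    rw [slidable_iff_sep T hT hUV he i, hmape,
      slidableOn_iff_sep R T hT hcardER hj hAB Finset.inter_subset_right hBR hPmem hiR]
    have hinj := proj_injOn R T hT hcardER
    constructor
    · intro hsep hr
      refine hsep ?_
      rw [← hmape] at hr
      exact up_reach R T hT hcardER heER hr (symmDiff X {i}) (symmDiff V {i})
        (by rw [inter_symmDiff_of_mem hiR]) (by rw [inter_symmDiff_of_mem hiR, hBV])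
    · intro hsep hr
      refine hsep ?_
      have hd := down_reach R T hT.1 hinj heER hr
      rwa [hmape, inter_symmDiff_of_mem hiR, inter_symmDiff_of_mem hiR, hBV] at hd
end
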